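/- arXiv:1112.0367 — 6 statements merged into one kernel-verified Lean document; each statement's English description precedes it below -/
import Mathlib

section
/- Let H be a finitely generated torsion-free nilpotent group of class at most 2 whose centre Z is infinite cyclic with generator z. Then H/Z is a finitely generated torsion-free (hence free) abelian group, for all x, y ∈ H there is a unique integer m with [x,y] = z^m, and the map β defined by β(xZ, yZ) = m (where [x,y] = z^m) is a well-defined ℤ-bilinear alternating form on H/Z which is nondegenerate: if β(xZ, yZ) = 0 for all y ∈ H then x ∈ Z. -/
/-- A monoid is torsion-free if every non-identity element has infinite order
(the definition of `Monoid.IsTorsionFree` in the older Mathlib). -/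
def Monoid.IsTorsionFree (G : Type*) [Monoid G] : Prop :=
  ∀ g : G, g ≠ 1 → ¬IsOfFinOrder g

open scoped commutatorElement

/-- Let `H` be a finitely generated torsion-free nilpotent group of class at most 2 whose
centre is infinite cyclic, generated by `z`.  Then `H/Z` is a finitely generated
torsion-free (hence free) abelian group; for all `x y : H` there is a unique `m : ℤ` with
`[x,y] = x⁻¹y⁻¹xy = z ^ m`; and the induced map `β` on `H/Z` with
`β (xZ) (yZ) = m` (where `[x,y] = z ^ m`) is a well-defined ℤ-bilinear alternating form
which is nondegenerate: if `β (xZ) (yZ) = 0` for all `y` then `x ∈ Z`. -/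
theorem commutator_symplectic_form_of_cyclic_centre
    (H : Type) [Group H] (hfg : Group.FG H)
    (htf : Monoid.IsTorsionFree H)
    (hclass : (⊤ : Subgroup H).lowerCentralSeries 2 = ⊥)
    (z : H) (hz : Subgroup.center H = Subgroup.zpowers z) (hzinf : ¬ IsOfFinOrder z) :
    Group.FG (H ⧸ Subgroup.center H) ∧
    Monoid.IsTorsionFree (H ⧸ Subgroup.center H) ∧
    (∀ a b : H ⧸ Subgroup.center H, a * b = b * a) ∧
    (∀ x y : H, ∃! m : ℤ, x⁻¹ * y⁻¹ * x * y = z ^ m) ∧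
    ∃ β : (H ⧸ Subgroup.center H) → (H ⧸ Subgroup.center H) → ℤ,
      (∀ x y : H, x⁻¹ * y⁻¹ * x * y =
          z ^ β ((x : H) : H ⧸ Subgroup.center H) ((y : H) : H ⧸ Subgroup.center H)) ∧
      (∀ a b c : H ⧸ Subgroup.center H, β (a * b) c = β a c + β b c) ∧
      (∀ a b c : H ⧸ Subgroup.center H, β a (b * c) = β a b + β a c) ∧
      (∀ a : H ⧸ Subgroup.center H, β a a = 0) ∧
      (∀ x : H, (∀ y : H,
          β ((x : H) : H ⧸ Subgroup.center H) ((y : H) : H ⧸ Subgroup.center H) = 0) →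
          x ∈ Subgroup.center H) := by
  classical
  have hzinj : Function.Injective fun n : ℤ => z ^ n :=
    injective_zpow_iff_not_isOfFinOrder.mpr hzinf
  -- all commutators are central
  have hcomm : ∀ x y : H, x⁻¹ * y⁻¹ * x * y ∈ Subgroup.center H := by
    intro x y
    have h1 : ⁅x⁻¹, y⁻¹⁆ ∈ (⊤ : Subgroup H).lowerCentralSeries 1 := by
      rw [Subgroup.top_lowerCentralSeries_one]
      exact Subgroup.commutator_mem_commutator (Subgroup.mem_top _) (Subgroup.mem_top _)
    have hce : x⁻¹ * y⁻¹ * x * y = ⁅x⁻¹, y⁻¹⁆ := by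
      simp [commutatorElement_def, mul_assoc]
    rw [hce, Subgroup.mem_center_iff]
    intro g
    have h2 : ⁅⁅x⁻¹, y⁻¹⁆, g⁆ ∈ (⊤ : Subgroup H).lowerCentralSeries 2 := by
      rw [show (2 : ℕ) = 1 + 1 from rfl, Subgroup.lowerCentralSeries_succ]
      exact Subgroup.commutator_mem_commutator h1 (Subgroup.mem_top _)
    rw [hclass, Subgroup.mem_bot, commutatorElement_eq_one_iff_commute] at h2
    exact h2.symm.eq
  -- existence and uniqueness of the exponent
  have hm : ∀ x y : H, ∃! m : ℤ, x⁻¹ * y⁻¹ * x * y = z ^ m := by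
    intro x y
    obtain ⟨m, hmz⟩ := Subgroup.mem_zpowers_iff.mp (hz ▸ hcomm x y)
    exact ⟨m, hmz.symm, fun n hn => hzinj (hn.symm.trans hmz.symm)⟩
  choose f hf hu using hm
  -- bilinearity identities in H
  have key1 : ∀ x x' y : H, (x * x')⁻¹ * y⁻¹ * (x * x') * y
      = (x⁻¹ * y⁻¹ * x * y) * (x'⁻¹ * y⁻¹ * x' * y) := by
    intro x x' y
    have hc := Subgroup.mem_center_iff.mp (hcomm x y)
    calc (x * x')⁻¹ * y⁻¹ * (x * x') * y
        = x'⁻¹ * (x⁻¹ * y⁻¹ * x * y) * (y⁻¹ * x' * y) := by group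
      _ = (x⁻¹ * y⁻¹ * x * y) * x'⁻¹ * (y⁻¹ * x' * y) := by rw [hc x'⁻¹]
      _ = (x⁻¹ * y⁻¹ * x * y) * (x'⁻¹ * y⁻¹ * x' * y) := by group
  have key2 : ∀ x y y' : H, x⁻¹ * (y * y')⁻¹ * x * (y * y')
      = (x⁻¹ * y'⁻¹ * x * y') * (x⁻¹ * y⁻¹ * x * y) := by
    intro x y y'
    have hc := Subgroup.mem_center_iff.mp (hcomm x y)
    calc x⁻¹ * (y * y')⁻¹ * x * (y * y')
        = (x⁻¹ * y'⁻¹ * x * y') * (y'⁻¹ * (x⁻¹ * y⁻¹ * x * y) * y') := by group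
      _ = (x⁻¹ * y'⁻¹ * x * y') * ((x⁻¹ * y⁻¹ * x * y) * y'⁻¹ * y') := by rw [hc y'⁻¹]
      _ = (x⁻¹ * y'⁻¹ * x * y') * (x⁻¹ * y⁻¹ * x * y) := by group
  have fadd1 : ∀ x x' y : H, f (x * x') y = f x y + f x' y := by
    intro x x' y
    apply hzinj
    show z ^ f (x * x') y = z ^ (f x y + f x' y)
    rw [← hf, key1, hf, hf, ← zpow_add]
  have fadd2 : ∀ x y y' : H, f x (y * y') = f x y + f x y' := by
    intro x y y'
    apply hzinj
    show z ^ f x (y * y') = z ^ (f x y + f x y')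
    rw [← hf, key2, hf, hf, ← zpow_add, add_comm]
  have fcentral1 : ∀ a y : H, a ∈ Subgroup.center H → f a y = 0 := by
    intro a y ha
    refine (hu a y 0 ?_).symm
    have h := Subgroup.mem_center_iff.mp ha y⁻¹
    calc a⁻¹ * y⁻¹ * a * y = a⁻¹ * (y⁻¹ * a) * y := by group
      _ = a⁻¹ * (a * y⁻¹) * y := by rw [h]
      _ = z ^ (0 : ℤ) := by group
  have fcentral2 : ∀ x a : H, a ∈ Subgroup.center H → f x a = 0 := by
    intro x a ha
    refine (hu x a 0 ?_).symm
    have h := Subgroup.mem_center_iff.mp ((Subgroup.center H).inv_mem ha) x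
    calc x⁻¹ * a⁻¹ * x * a = x⁻¹ * (a⁻¹ * x) * a := by group
      _ = x⁻¹ * (x * a⁻¹) * a := by rw [← h]
      _ = z ^ (0 : ℤ) := by group
  have fself : ∀ x : H, f x x = 0 := by
    intro x
    refine (hu x x 0 ?_).symm
    group
  -- if f x y = 0 for all y then x is central
  have fnd : ∀ x : H, (∀ y : H, f x y = 0) → x ∈ Subgroup.center H := by
    intro x hx
    rw [Subgroup.mem_center_iff]
    intro g
    have h1 : x⁻¹ * g⁻¹ * x * g = 1 := by rw [hf x g, hx g, zpow_zero]
    have h2 : Commute x⁻¹ g⁻¹ := by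
      rw [← commutatorElement_eq_one_iff_commute]
      simpa [commutatorElement_def, mul_assoc] using h1
    have h3 : Commute x g := by simpa using h2.inv_left.inv_right
    exact (h3.symm).eq
  -- descent to the quotient
  have hresp : ∀ (x y x' y' : H),
      x⁻¹ * x' ∈ Subgroup.center H → y⁻¹ * y' ∈ Subgroup.center H → f x y = f x' y' := by
    intro x y x' y' hx hy
    have ex : x' = x * (x⁻¹ * x') := by group
    have ey : y' = y * (y⁻¹ * y') := by group
    conv_rhs => rw [ex, ey]
    rw [fadd1, fadd2, fcentral1 _ _ hx, fcentral2 _ _ hy]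
    simp
  refine ⟨?_, ?_, ?_, fun x y => ⟨f x y, hf x y, fun n hn => hu x y n hn⟩, ?_⟩
  · haveI := hfg
    infer_instance
  · -- torsion-free quotient
    have fpow : ∀ (x y : H) (n : ℕ), f (x ^ n) y = n * f x y := by
      intro x y n
      induction n with
      | zero => simpa using fcentral1 1 y (Subgroup.center H).one_mem
      | succ n ih => rw [pow_succ, fadd1, ih]; push_cast; ring
    intro a ha hfin
    obtain ⟨x, rfl⟩ := QuotientGroup.mk_surjective a
    obtain ⟨n, hn, hpow⟩ := isOfFinOrder_iff_pow_eq_one.mp hfin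
    have hx : x ^ n ∈ Subgroup.center H := by
      rw [← QuotientGroup.eq_one_iff, QuotientGroup.mk_pow]
      exact hpow
    have hx0 : ∀ y : H, f x y = 0 := by
      intro y
      have h0 : (n : ℤ) * f x y = 0 := by rw [← fpow]; exact fcentral1 _ y hx
      rcases mul_eq_zero.mp h0 with h | h
      · exact absurd (Nat.cast_eq_zero.mp h) hn.ne'
      · exact h
    exact ha ((QuotientGroup.eq_one_iff x).mpr (fnd x hx0))
  · -- abelian quotient
    intro a b
    obtain ⟨x, rfl⟩ := QuotientGroup.mk_surjective a
    obtain ⟨y, rfl⟩ := QuotientGroup.mk_surjective b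
    rw [← QuotientGroup.mk_mul, ← QuotientGroup.mk_mul, QuotientGroup.eq]
    have : (x * y)⁻¹ * (y * x) = y⁻¹ * x⁻¹ * y * x := by group
    rw [this]
    exact hcomm y x
  · -- the form β
    refine ⟨fun a b => Quotient.liftOn₂' a b f (fun x y x' y' hx hy =>
        hresp x y x' y' (QuotientGroup.leftRel_apply.mp hx) (QuotientGroup.leftRel_apply.mp hy)), fun x y => hf x y, ?_, ?_, ?_, ?_⟩
    · intro a b c
      obtain ⟨x, rfl⟩ := QuotientGroup.mk_surjective a
      obtain ⟨y, rfl⟩ := QuotientGroup.mk_surjective b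
      obtain ⟨w, rfl⟩ := QuotientGroup.mk_surjective c
      rw [← QuotientGroup.mk_mul]
      exact fadd1 x y w
    · intro a b c
      obtain ⟨x, rfl⟩ := QuotientGroup.mk_surjective a
      obtain ⟨y, rfl⟩ := QuotientGroup.mk_surjective b
      obtain ⟨w, rfl⟩ := QuotientGroup.mk_surjective c
      rw [← QuotientGroup.mk_mul]
      exact fadd2 x y w
    · intro a
      obtain ⟨x, rfl⟩ := QuotientGroup.mk_surjective a
      exact fself x
    · intro x hx
      exact fnd x hx
end

section
/- Let 𝔽 be a subfield of ℝ, let (V, β) be a symplectic space over 𝔽 of dimension 2k, and let Ω be a finite collection of subspaces of V, each of dimension at most k. Then there exists a Lagrangian subspace L of V such that L ∩ W = {0} for every W ∈ Ω. -/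
open Module

set_option synthInstance.maxHeartbeats 1000000
set_option maxHeartbeats 1000000

/-- Over an infinite field, a subspace `P` not contained in any member of a
finite family of subspaces contains a vector avoiding all of them. -/
lemma escape_finite_union_aux {K E : Type*} [Field K] [Infinite K] [AddCommGroup E]
    [Module K E] (P : Submodule K E) (s : Finset (Submodule K E))
    (hs : ∀ q ∈ s, ¬ P ≤ q) : ∃ v ∈ P, ∀ q ∈ s, v ∉ q := by
  classical
  set t : Finset (Submodule K P) := s.image (fun q => q.comap P.subtype) with ht
  have htop : ⊤ ∉ t := by
    intro h
    obtain ⟨q, hq, hq'⟩ := Finset.mem_image.mp h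
    exact hs q hq (Submodule.comap_subtype_eq_top.mp hq')
  have hne := Subspace.biUnion_ne_univ_of_top_notMem (s := t) htop
  obtain ⟨x, hx⟩ := Set.ne_univ_iff_exists_notMem _ |>.mp hne
  refine ⟨(x : E), x.2, fun q hq hxq => ?_⟩
  exact hx (Set.mem_biUnion (Finset.mem_image.mpr ⟨q, hq, rfl⟩) hxq)

/-- Let `(V, β)` be a symplectic space of dimension `2k` over a subfield `𝔽` of `ℝ` and let
`Ω` be a finite collection of subspaces of `V` of dimension at most `k`.  Then there is a
Lagrangian subspace `L` of `V` (an isotropic subspace of dimension `k`) meeting every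
member of `Ω` trivially. -/
theorem exists_lagrangian_avoiding_finitely_many_subspaces
    (𝔽 : Subfield ℝ) (V : Type) [AddCommGroup V] [Module 𝔽 V] [FiniteDimensional 𝔽 V]
    (k : ℕ) (hdim : finrank 𝔽 V = 2 * k)
    (β : V →ₗ[𝔽] V →ₗ[𝔽] 𝔽)
    (halt : ∀ v : V, β v v = 0)
    (hnd : ∀ v : V, (∀ w : V, β v w = 0) → v = 0)
    (Ω : Finset (Submodule 𝔽 V)) (hΩ : ∀ W ∈ Ω, finrank 𝔽 W ≤ k) :
    ∃ L : Submodule 𝔽 V, (∀ x ∈ L, ∀ y ∈ L, β x y = 0) ∧ finrank 𝔽 L = k ∧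
      ∀ W ∈ Ω, L ⊓ W = ⊥ := by
  classical
  have halt' : LinearMap.BilinForm.IsAlt β := halt
  have hrefl : LinearMap.BilinForm.IsRefl β := halt'.isRefl
  have hnd' : LinearMap.BilinForm.Nondegenerate β :=
    (LinearMap.IsRefl.nondegenerate_iff_separatingLeft hrefl).mpr hnd
  have key : ∀ j, j ≤ k → ∃ L : Submodule 𝔽 V,
      (∀ x ∈ L, ∀ y ∈ L, β x y = 0) ∧ finrank 𝔽 L = j ∧
      ∀ W ∈ Ω, L ⊓ W = ⊥ ∧
        finrank 𝔽 ↥(W ⊓ LinearMap.BilinForm.orthogonal β L) + j ≤ k := by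
    intro j
    induction j with
    | zero =>
      intro _
      refine ⟨⊥, ?_, finrank_bot _ _, fun W hW => ⟨bot_inf_eq W, ?_⟩⟩
      · intro x hx
        rw [Submodule.mem_bot] at hx
        subst hx; simp
      · have h1 : finrank 𝔽 ↥(W ⊓ LinearMap.BilinForm.orthogonal β (⊥ : Submodule 𝔽 V))
            ≤ finrank 𝔽 W := Submodule.finrank_mono inf_le_left
        have h2 := hΩ W hW
        omega
    | succ j ih =>
      intro hj1
      have hjk : j < k := hj1
      obtain ⟨L, hLiso, hLrank, hLW⟩ := ih (Nat.le_of_lt hjk)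
      set P := LinearMap.BilinForm.orthogonal β L with hP
      have hLP : L ≤ P := fun x hx n hn => hLiso n hn x hx
      have hPrank : finrank 𝔽 P = 2 * k - j := by
        rw [hP, LinearMap.BilinForm.finrank_orthogonal hnd', hdim, hLrank]
      -- the finite family of "bad" subspaces to avoid
      set s : Finset (Submodule 𝔽 V) :=
        insert L ((Ω.image fun W => L ⊔ (W ⊓ P)) ∪
          ((Ω.filter fun W => W ⊓ P ≠ ⊥).image
            fun W => LinearMap.BilinForm.orthogonal β (W ⊓ P))) with hs
      have hproper : ∀ q ∈ s, ¬ P ≤ q := by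
        intro q hq
        rw [hs, Finset.mem_insert, Finset.mem_union] at hq
        rcases hq with rfl | hq | hq
        · intro hle
          have := Submodule.finrank_mono (M := V) hle
          rw [hPrank, hLrank] at this
          omega
        · obtain ⟨W, hW, rfl⟩ := Finset.mem_image.mp hq
          intro hle
          have h1 := Submodule.finrank_mono (M := V) hle
          have h2 := Submodule.finrank_sup_add_finrank_inf_eq L (W ⊓ P)
          have h3 := (hLW W hW).2
          have h4 : finrank 𝔽 ↥(L ⊓ (W ⊓ P)) ≤ finrank 𝔽 ↥(W ⊓ P) :=
            Submodule.finrank_mono inf_le_right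
          rw [hPrank] at h1
          rw [hLrank] at h2
          omega
        · obtain ⟨W, hW, rfl⟩ := Finset.mem_image.mp hq
          have hWΩ : W ∈ Ω := (Finset.mem_filter.mp hW).1
          have hDne : W ⊓ P ≠ ⊥ := (Finset.mem_filter.mp hW).2
          intro hle
          apply hDne
          rw [← le_bot_iff, ← (hLW W hWΩ).1]
          intro d hd
          have hdL : d ∈ L := by
            rw [← LinearMap.BilinForm.orthogonal_orthogonal hnd' hrefl L, ← hP]
            intro n hn
            exact hrefl d n (hle hn d hd)
          exact ⟨hdL, hd.1⟩
      obtain ⟨v, hvP, hv⟩ := escape_finite_union_aux P s hproper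
      have hvL : v ∉ L := hv L (Finset.mem_insert_self _ _)
      have hv0 : v ≠ 0 := fun h => hvL (h ▸ L.zero_mem)
      set L' : Submodule 𝔽 V := L ⊔ Submodule.span 𝔽 {v} with hL'
      have hvL' : v ∈ L' := Submodule.mem_sup_right (Submodule.mem_span_singleton_self v)
      have hL'P : L' ≤ P := sup_le hLP
        ((Submodule.span_singleton_le_iff_mem v P).mpr hvP)
      -- orthogonality facts about v
      have hLv : ∀ n ∈ L, β n v = 0 := fun n hn => hvP n hn
      have hvLmap : ∀ n ∈ L, β v n = 0 := fun n hn => hrefl n v (hLv n hn)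
      -- L' is isotropic
      have hL'iso : ∀ x ∈ L', ∀ y ∈ L', β x y = 0 := by
        intro x hx y hy
        obtain ⟨l₁, hl₁, x₂, hx₂, rfl⟩ := Submodule.mem_sup.mp hx
        obtain ⟨l₂, hl₂, y₂, hy₂, rfl⟩ := Submodule.mem_sup.mp hy
        obtain ⟨a, rfl⟩ := Submodule.mem_span_singleton.mp hx₂
        obtain ⟨b, rfl⟩ := Submodule.mem_span_singleton.mp hy₂
        simp only [map_add, map_smul, LinearMap.add_apply, LinearMap.smul_apply,
          smul_eq_mul]
        rw [hLiso l₁ hl₁ l₂ hl₂, hLv l₁ hl₁, hvLmap l₂ hl₂, halt v]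
        ring
      -- disjointness from L
      have hdisj : L ⊓ Submodule.span 𝔽 {v} = ⊥ := by
        rw [eq_bot_iff]
        rintro x ⟨hxL, hxs⟩
        obtain ⟨c, rfl⟩ := Submodule.mem_span_singleton.mp hxs
        rcases eq_or_ne c 0 with rfl | hc
        · simp
        · refine absurd ?_ hvL
          have hm := L.smul_mem c⁻¹ hxL
          rwa [smul_smul, inv_mul_cancel₀ hc, one_smul] at hm
      have hL'rank : finrank 𝔽 L' = j + 1 := by
        have h2 := Submodule.finrank_sup_add_finrank_inf_eq L (Submodule.span 𝔽 {v})
        rw [← hL'] at h2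
        rw [hdisj, hLrank, finrank_span_singleton hv0, finrank_bot] at h2
        omega
      refine ⟨L', hL'iso, hL'rank, fun W hW => ⟨?_, ?_⟩⟩
      · -- L' ⊓ W = ⊥
        rw [eq_bot_iff]
        rintro x ⟨hxL', hxW⟩
        obtain ⟨l, hl, x₂, hx₂, hxeq⟩ := Submodule.mem_sup.mp hxL'
        obtain ⟨c, rfl⟩ := Submodule.mem_span_singleton.mp hx₂
        rcases eq_or_ne c 0 with rfl | hc
        · rw [zero_smul, add_zero] at hxeq
          have : x ∈ L ⊓ W := ⟨hxeq ▸ hl, hxW⟩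
          rwa [(hLW W hW).1] at this
        · exfalso
          have hq : L ⊔ (W ⊓ P) ∈ s := by
            rw [hs]
            exact Finset.mem_insert_of_mem (Finset.mem_union_left _
              (Finset.mem_image.mpr ⟨W, hW, rfl⟩))
          apply hv _ hq
          have hcv : c • v = x - l := by rw [← hxeq]; abel
          have hveq : v = c⁻¹ • x - c⁻¹ • l := by
            rw [← smul_sub, ← hcv, smul_smul, inv_mul_cancel₀ hc, one_smul]
          rw [hveq]
          exact sub_mem
            (Submodule.smul_mem _ _ (Submodule.mem_sup_right ⟨hxW, hL'P hxL'⟩))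
            (Submodule.smul_mem _ _ (Submodule.mem_sup_left hl))
      · -- dimension bound for W ⊓ (L')^⊥
        have hsub : W ⊓ LinearMap.BilinForm.orthogonal β L' ≤
            (W ⊓ P) ⊓ LinearMap.ker (β v) := by
          rintro x ⟨hxW, hxo⟩
          refine ⟨⟨hxW, fun n hn => hxo n (Submodule.mem_sup_left hn)⟩, ?_⟩
          simpa using hxo v hvL'
        rcases eq_or_ne (W ⊓ P) ⊥ with hD | hD
        · have : W ⊓ LinearMap.BilinForm.orthogonal β L' = ⊥ := by
            rw [← le_bot_iff]
            exact le_trans hsub (le_trans inf_le_left (le_of_eq hD))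
          rw [this, finrank_bot]
          omega
        · have hq : LinearMap.BilinForm.orthogonal β (W ⊓ P) ∈ s := by
            rw [hs]
            exact Finset.mem_insert_of_mem (Finset.mem_union_right _
              (Finset.mem_image.mpr ⟨W, Finset.mem_filter.mpr ⟨hW, hD⟩, rfl⟩))
          have hvq := hv _ hq
          have hd : ∃ d ∈ W ⊓ P, β v d ≠ 0 := by
            by_contra h
            push_neg at h
            exact hvq (fun n hn => hrefl v n (h n hn))
          obtain ⟨d, hdD, hdne⟩ := hd
          have hlt : (W ⊓ P) ⊓ LinearMap.ker (β v) < W ⊓ P := by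
            refine lt_of_le_of_ne inf_le_left (fun h => hdne ?_)
            have : d ∈ (W ⊓ P) ⊓ LinearMap.ker (β v) := by rw [h]; exact hdD
            simpa using this.2
          have h1 : finrank 𝔽 ↥(W ⊓ LinearMap.BilinForm.orthogonal β L') ≤
              finrank 𝔽 ↥((W ⊓ P) ⊓ LinearMap.ker (β v)) := Submodule.finrank_mono hsub
          have h2 := Submodule.finrank_lt_finrank_of_lt hlt
          have h3 := (hLW W hW).2
          omega
  obtain ⟨L, h1, h2, h3⟩ := key k le_rfl
  exact ⟨L, h1, h2, fun W hW => (h3 W hW).1⟩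
end

section
/- Let 𝔽 be a subfield of ℝ, let (V, β) be a symplectic space over 𝔽 of dimension 2k with symplectic basis e_1, f_1, …, e_k, f_k, let L be the subspace spanned by e_1, …, e_k, and let Ω be a finite collection of k-dimensional subspaces of V each of which has trivial intersection with L. For μ = (μ_1, …, μ_k) with each μ_i ∈ 𝔽 ∩ [0,1], let K_μ be the subspace spanned by (1−μ_1)e_1 + μ_1 f_1, …, (1−μ_k)e_k + μ_k f_k. Then there exists ε > 0 such that for every μ with μ_i ∈ 𝔽 and 0 ≤ μ_i ≤ ε for all i, the subspace K_μ is transversal to every W ∈ Ω, i.e., V = K_μ ⊕ W. -/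
open Module

set_option synthInstance.maxHeartbeats 1000000

set_option maxHeartbeats 1000000

/-- Let `(V, β)` be a symplectic space of dimension `2k` over a subfield `𝔽` of `ℝ` with
symplectic basis `e₁, f₁, …, e_k, f_k` (here `b (.inl i) = eᵢ` and `b (.inr i) = fᵢ`), let
`L` be the subspace spanned by `e₁, …, e_k`, and let `Ω` be a finite collection of
`k`-dimensional subspaces of `V` each meeting `L` trivially.  Then there exists `ε > 0`
such that for every `μ = (μ₁, …, μ_k)` with `μᵢ ∈ 𝔽` and `0 ≤ μᵢ ≤ ε` for all `i`, the
subspace `K_μ` spanned by the vectors `(1-μᵢ)eᵢ + μᵢfᵢ` is transversal to every `W ∈ Ω`,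
i.e. `V = K_μ ⊕ W`. -/
theorem kmu_eventually_transversal_to_Omega
    (𝔽 : Subfield ℝ) (V : Type) [AddCommGroup V] [Module 𝔽 V]
    (k : ℕ)
    (β : V →ₗ[𝔽] V →ₗ[𝔽] 𝔽)
    (halt : ∀ v : V, β v v = 0)
    (hnd : ∀ v : V, (∀ w : V, β v w = 0) → v = 0)
    (b : Basis (Fin k ⊕ Fin k) 𝔽 V)
    (hee : ∀ i j, β (b (Sum.inl i)) (b (Sum.inl j)) = 0)
    (hff : ∀ i j, β (b (Sum.inr i)) (b (Sum.inr j)) = 0)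
    (hef : ∀ i j, β (b (Sum.inl i)) (b (Sum.inr j)) = if i = j then 1 else 0)
    (Ω : Finset (Submodule 𝔽 V))
    (hΩdim : ∀ W ∈ Ω, finrank 𝔽 W = k)
    (hΩL : ∀ W ∈ Ω, (Submodule.span 𝔽 (Set.range fun i => b (Sum.inl i))) ⊓ W = ⊥) :
    ∃ ε : ℝ, 0 < ε ∧ ∀ μ : Fin k → 𝔽, (∀ i, (0 : ℝ) ≤ (μ i : ℝ) ∧ (μ i : ℝ) ≤ ε) →
      ∀ W ∈ Ω, IsCompl (Submodule.span 𝔽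
        (Set.range fun i => (1 - μ i) • b (Sum.inl i) + μ i • b (Sum.inr i))) W := by
  classical
  have hfd : FiniteDimensional 𝔽 V := Module.Finite.of_basis b
  -- choose a linearly independent spanning family for each `W ∈ Ω`
  have hex : ∀ W : Submodule 𝔽 V, ∃ w : Fin k → V, W ∈ Ω →
      LinearIndependent 𝔽 w ∧ Submodule.span 𝔽 (Set.range w) = W := by
    intro W
    by_cases hW : W ∈ Ω
    · have bw : Basis (Fin k) 𝔽 W := Module.finBasisOfFinrankEq 𝔽 W (hΩdim W hW)
      refine ⟨fun j => (bw j : V), fun _ => ⟨?_, ?_⟩⟩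
      · exact bw.linearIndependent.map' W.subtype (Submodule.ker_subtype W)
      · have h1 : Set.range (fun j => ((bw j : W) : V)) = W.subtype '' Set.range bw := by
          rw [← Set.range_comp]; rfl
        rw [h1, Submodule.span_image, bw.span_eq, Submodule.map_top, Submodule.range_subtype]
    · exact ⟨0, fun h => absurd h hW⟩
  choose wv hwv using hex
  -- the candidate bases
  set u : Submodule 𝔽 V → (Fin k → 𝔽) → (Fin k ⊕ Fin k) → V := fun W μ =>
    Sum.elim (fun i => (1 - μ i) • b (Sum.inl i) + μ i • b (Sum.inr i)) (wv W) with hu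
  -- a unit determinant gives transversality
  have htrans : ∀ W ∈ Ω, ∀ μ : Fin k → 𝔽, IsUnit (b.det (u W μ)) →
      IsCompl (Submodule.span 𝔽
        (Set.range fun i => (1 - μ i) • b (Sum.inl i) + μ i • b (Sum.inr i))) W := by
    intro W hW μ hdet
    obtain ⟨hli, hsp⟩ := (Basis.is_basis_iff_det b).2 hdet
    have himg1 : (u W μ) '' Set.range Sum.inl =
        Set.range (fun i => (1 - μ i) • b (Sum.inl i) + μ i • b (Sum.inr i)) := by
      rw [← Set.range_comp]; rfl
    have himg2 : (u W μ) '' Set.range Sum.inr = Set.range (wv W) := by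
      rw [← Set.range_comp]; rfl
    constructor
    · have hd := hli.disjoint_span_image Set.isCompl_range_inl_range_inr.disjoint
      rw [himg1, himg2, (hwv W hW).2] at hd
      exact hd
    · rw [codisjoint_iff]
      have hr : Set.range (u W μ) =
          (Set.range fun i => (1 - μ i) • b (Sum.inl i) + μ i • b (Sum.inr i)) ∪
            Set.range (wv W) := Set.Sum.elim_range _ _
      rw [← (hwv W hW).2, ← Submodule.span_union, ← hr, hsp]
  -- at μ = 0, the determinant is a unit
  have hbase : ∀ W ∈ Ω, IsUnit (b.det (u W 0)) := by
    intro W hW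
    apply (Basis.is_basis_iff_det b).1
    have hu0 : u W 0 = Sum.elim (fun i => b (Sum.inl i)) (wv W) := by
      funext x; cases x <;> simp [hu]
    rw [hu0]
    have hli1 : LinearIndependent 𝔽 (fun i => b (Sum.inl i)) :=
      b.linearIndependent.comp Sum.inl Sum.inl_injective
    have hdisj : Disjoint (Submodule.span 𝔽 (Set.range fun i => b (Sum.inl i)))
        (Submodule.span 𝔽 (Set.range (wv W))) := by
      rw [(hwv W hW).2, disjoint_iff]
      exact hΩL W hW
    have hli := hli1.sum_type (hwv W hW).1 hdisj
    refine ⟨hli, hli.span_eq_top_of_card_eq_finrank' ?_⟩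
    simp [finrank_eq_card_basis b]
  -- the real matrices
  set C : Submodule 𝔽 V → Matrix (Fin k ⊕ Fin k) (Fin k) ℝ :=
    fun W a j => ((b.repr (wv W j)) a : ℝ) with hC
  set M : Submodule 𝔽 V → (Fin k → ℝ) → Matrix (Fin k ⊕ Fin k) (Fin k ⊕ Fin k) ℝ :=
    fun W t a j => Sum.elim
      (fun i => if a = Sum.inl i then 1 - t i else if a = Sum.inr i then t i else 0)
      (fun j' => C W a j') j with hMdef
  -- the key matrix identity
  have hM : ∀ W (μ : Fin k → 𝔽),
      M W (fun i => (μ i : ℝ)) = ((b.toMatrix (u W μ)).map 𝔽.subtype) := by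
    intro W μ
    ext a j
    rcases j with i | j
    · simp only [hMdef, Sum.elim_inl, Matrix.map_apply, Basis.toMatrix_apply, hu,
        map_add, map_smul, b.repr_self]
      rcases a with a | a <;> rcases eq_or_ne a i with h | h
      · subst h
        simp [Finsupp.single_apply]
      · simp [Finsupp.single_apply, h, Ne.symm h]
      · subst h
        simp [Finsupp.single_apply]
      · simp [Finsupp.single_apply, h, Ne.symm h]
    · simp [hMdef, hC, Matrix.map_apply, Basis.toMatrix_apply, hu]
  -- continuity of the product of determinants
  have hcont : Continuous fun t : Fin k → ℝ => ∏ W ∈ Ω, (M W t).det := by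
    apply continuous_finset_prod
    intro W _
    apply Continuous.matrix_det
    apply continuous_pi; intro a
    apply continuous_pi; intro j
    rcases j with i | j
    · by_cases h1 : a = Sum.inl i
      · simpa [hMdef, h1] using (show Continuous fun t : Fin k → ℝ => 1 - t i from continuous_const.sub (continuous_apply i))
      · by_cases h2 : a = Sum.inr i
        · simpa [hMdef, h1, h2] using (continuous_apply i)
        · simpa [hMdef, h1, h2] using continuous_const
    · simpa [hMdef] using continuous_const
  -- the product is nonzero at 0
  have hdetR : ∀ W (μ : Fin k → 𝔽),
      (M W (fun i => (μ i : ℝ))).det = 𝔽.subtype ((b.toMatrix (u W μ)).det) := by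
    intro W μ
    rw [hM, ← RingHom.mapMatrix_apply, ← RingHom.map_det]
  have hzero_coe : (fun i => (((0 : Fin k → 𝔽)) i : ℝ)) = (0 : Fin k → ℝ) := by
    funext i; simp
  have h0 : (∏ W ∈ Ω, (M W 0).det) ≠ 0 := by
    rw [Finset.prod_ne_zero_iff]
    intro W hW
    have h1 := hdetR W 0
    rw [hzero_coe] at h1
    have h2 := (hbase W hW).ne_zero
    rw [Basis.det_apply] at h2
    rw [h1]
    exact fun hd => h2 (Subtype.ext hd)
  -- find ε by continuity
  have hnhds : {t : Fin k → ℝ | (∏ W ∈ Ω, (M W t).det) ≠ 0} ∈ nhds (0 : Fin k → ℝ) := by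
    have : IsOpen {t : Fin k → ℝ | (∏ W ∈ Ω, (M W t).det) ≠ 0} :=
      isOpen_compl_singleton.preimage hcont
    exact this.mem_nhds h0
  obtain ⟨ε, hε, hball⟩ := Metric.mem_nhds_iff.1 hnhds
  refine ⟨ε / 2, by positivity, ?_⟩
  intro μ hμ W hW
  have htmem : (fun i => (μ i : ℝ)) ∈ Metric.ball (0 : Fin k → ℝ) ε := by
    rw [Metric.mem_ball, dist_pi_lt_iff hε]
    intro i
    have h1 := (hμ i).1
    have h2 := (hμ i).2
    simp only [Pi.zero_apply, Real.dist_eq, sub_zero]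
    rw [abs_of_nonneg h1]
    linarith
  have hne := hball htmem
  rw [Set.mem_setOf_eq, Finset.prod_ne_zero_iff] at hne
  have hW0 := hne W hW
  rw [hdetR W μ] at hW0
  have hW1 : (b.toMatrix (u W μ)).det ≠ 0 := fun hd => hW0 (by rw [hd, map_zero])
  apply htrans W hW μ
  rw [Basis.det_apply]
  exact isUnit_iff_ne_zero.2 hW1
end

section
/- Let 𝔽 be a subfield of ℝ, let (V, β) be a symplectic space over 𝔽 of dimension 2k, and let Ω be a finite collection of subspaces of V each of dimension at most k. Then there exists a symplectic basis e_1, f̂_1, …, e_k, f̂_k of V such that every subspace associated to this basis has trivial intersection with every subspace W ∈ Ω. -/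
open Module

set_option synthInstance.maxHeartbeats 1000000
set_option maxHeartbeats 1000000

private lemma avoid_finset (𝔽 E : Type) [Field 𝔽] [Infinite 𝔽] [AddCommGroup E] [Module 𝔽 E]
    (s : Finset (Submodule 𝔽 E)) (hs : ∀ p ∈ s, p ≠ ⊤) : ∃ v : E, ∀ p ∈ s, v ∉ p := by
  have := Subspace.biUnion_ne_univ_of_top_notMem (s := s) (fun h => hs ⊤ h rfl)
  rw [Set.ne_univ_iff_exists_notMem] at this
  obtain ⟨v, hv⟩ := this
  exact ⟨v, fun p hp hvp => hv (Set.mem_biUnion hp hvp)⟩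

private lemma line_avoid (𝔽 E : Type) [Field 𝔽] [Infinite 𝔽] [AddCommGroup E] [Module 𝔽 E]
    (S : Finset (Submodule 𝔽 E)) (u : E) (hu : ∀ p ∈ S, u ∉ p) (C : Finset E) (f₀ : E) :
    ∃ t : 𝔽, ∀ p ∈ S, ∀ c ∈ C, c + f₀ + t • u ∉ p := by
  have hfin : (⋃ p ∈ S, ⋃ c ∈ C, {t : 𝔽 | c + f₀ + t • u ∈ p}).Finite := by
    refine Set.Finite.biUnion S.finite_toSet fun p hp => Set.Finite.biUnion C.finite_toSet
      fun c hc => Set.Subsingleton.finite ?_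
    intro t1 h1 t2 h2
    by_contra hne
    apply hu p hp
    have : (t1 - t2) • u ∈ p := by
      have := p.sub_mem h1 h2
      simpa [sub_smul, add_sub_add_left_eq_sub] using this
    have h3 := p.smul_mem (t1 - t2)⁻¹ this
    rwa [smul_smul, inv_mul_cancel₀ (sub_ne_zero.mpr hne), one_smul] at h3
  obtain ⟨t, ht⟩ := hfin.infinite_compl.nonempty
  refine ⟨t, fun p hp c hc hmem => ht ?_⟩
  exact Set.mem_biUnion hp (Set.mem_biUnion hc hmem)

private lemma key (𝔽 : Type) [Field 𝔽] [Infinite 𝔽] (k : ℕ) :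
    ∀ (V : Type) [AddCommGroup V] [Module 𝔽 V] [FiniteDimensional 𝔽 V]
      (β : V →ₗ[𝔽] V →ₗ[𝔽] 𝔽),
      finrank 𝔽 V = 2 * k →
      (∀ v : V, β v v = 0) →
      (∀ v : V, (∀ w : V, β v w = 0) → v = 0) →
      ∀ (Ω : Finset (Submodule 𝔽 V)), (∀ W ∈ Ω, finrank 𝔽 W ≤ k) →
      ∃ b : Basis (Fin k ⊕ Fin k) 𝔽 V,
        (∀ i j, β (b (Sum.inl i)) (b (Sum.inl j)) = 0) ∧
        (∀ i j, β (b (Sum.inr i)) (b (Sum.inr j)) = 0) ∧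
        (∀ i j, β (b (Sum.inl i)) (b (Sum.inr j)) = if i = j then 1 else 0) ∧
        ∀ lam : Fin k → V,
          (∀ i, lam i = b (Sum.inl i) ∨ lam i = b (Sum.inr i) ∨
            lam i = b (Sum.inl i) + b (Sum.inr i)) →
          ∀ W ∈ Ω, Submodule.span 𝔽 (Set.range lam) ⊓ W = ⊥ := by
  induction k with
  | zero =>
    intro V _ _ _ β hdim halt hnd Ω hΩ
    have : Subsingleton V := by
      rw [mul_zero] at hdim
      exact finrank_zero_iff.mp hdim
    refine ⟨Basis.empty V, fun i => i.elim0, fun i => i.elim0, fun i => i.elim0, ?_⟩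
    intro lam _ W _
    apply Submodule.eq_bot_iff _ |>.mpr
    intro x _
    exact Subsingleton.elim x 0
  | succ k IH =>
    intro V _ _ _ β hdim halt hnd Ω hΩ
    classical
    -- skew symmetry
    have hskew : ∀ x y : V, β x y = -β y x := by
      intro x y
      have h := halt (x + y)
      simp only [map_add, LinearMap.add_apply, halt x, halt y, zero_add, add_zero] at h
      linear_combination h
    have hrefl : β.IsRefl := LinearMap.IsAlt.isRefl halt
    have hndB : LinearMap.BilinForm.Nondegenerate β :=
      hrefl.nondegenerate_iff_separatingLeft.mpr hnd
    -- the avoid list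
    set T : Finset (Submodule 𝔽 V) :=
      insert ⊥ (Ω ∪ (Ω.filter (fun W : Submodule 𝔽 V => finrank 𝔽 W = k + 1)).image
        (LinearMap.BilinForm.orthogonal β)) with hTdef
    have hple : ∀ p ∈ T, finrank 𝔽 p ≤ k + 1 := by
      intro p hp
      rcases Finset.mem_insert.mp hp with h | h
      · subst h; simp [finrank_bot]
      · rcases Finset.mem_union.mp h with h | h
        · exact hΩ p h
        · obtain ⟨W, hW, rfl⟩ := Finset.mem_image.mp h
          obtain ⟨hWΩ, hWrank⟩ := Finset.mem_filter.mp hW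
          rw [LinearMap.BilinForm.finrank_orthogonal hndB, hdim, hWrank]
          omega
    have hT : ∀ p ∈ T, p ≠ ⊤ := by
      intro p hp h
      have := hple p hp
      rw [h, finrank_top, hdim] at this
      omega
    -- pick e₁
    obtain ⟨e₁, he₁⟩ := avoid_finset 𝔽 V T hT
    have hbotT : (⊥ : Submodule 𝔽 V) ∈ T := Finset.mem_insert_self _ _
    have he₁0 : e₁ ≠ 0 := fun h => he₁ ⊥ hbotT (h ▸ Submodule.zero_mem ⊥)
    obtain ⟨w, hw⟩ : ∃ w, β e₁ w ≠ 0 := by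
      by_contra h
      push_neg at h
      exact he₁0 (hnd e₁ h)
    set f₀ : V := (β e₁ w)⁻¹ • w with hf₀def
    have hf₀ : β e₁ f₀ = 1 := by
      simp [hf₀def, map_smul, smul_eq_mul, inv_mul_cancel₀ hw]
    -- the kernel of β e₁
    set K : Submodule 𝔽 V := LinearMap.ker (β e₁) with hKdef
    have hKrank : finrank 𝔽 K = 2 * k + 1 := by
      have hsurj : Function.Surjective (β e₁) := by
        intro c
        exact ⟨c • f₀, by simp [map_smul, hf₀, smul_eq_mul]⟩
      have h1 := LinearMap.finrank_range_add_finrank_ker (β e₁)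
      rw [LinearMap.range_eq_top.mpr hsurj, finrank_top, Module.finrank_self, hdim,
        ← hKdef] at h1
      omega
    have hKp : ∀ p ∈ T, ¬ K ≤ p := by
      intro p hp hle
      have h1 : finrank 𝔽 K ≤ finrank 𝔽 p := Submodule.finrank_mono hle
      have h2 := hple p hp
      have hKeqp : K = p := Submodule.eq_of_le_of_finrank_le hle (by omega)
      have he₁K : e₁ ∈ K := by
        rw [hKdef, LinearMap.mem_ker]; exact halt e₁
      exact he₁ p hp (hKeqp ▸ he₁K)
    -- pick u inside K avoiding T
    obtain ⟨u', hu'⟩ := avoid_finset 𝔽 K (T.image (Submodule.comap K.subtype))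
      (by
        intro q hq
        obtain ⟨p, hp, rfl⟩ := Finset.mem_image.mp hq
        intro h
        exact hKp p hp (Submodule.comap_subtype_eq_top.mp h))
    have hu : ∀ p ∈ T, (u' : V) ∉ p := by
      intro p hp h
      exact hu' (Submodule.comap K.subtype p) (Finset.mem_image_of_mem _ hp)
        (by simpa [Submodule.mem_comap] using h)
    -- pick t
    obtain ⟨t, ht⟩ := line_avoid 𝔽 V T (u' : V) hu {0, e₁} f₀
    set f₁ : V := f₀ + t • (u' : V) with hf₁def
    have hf₁T : ∀ p ∈ T, f₁ ∉ p := by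
      intro p hp
      have := ht p hp 0 (by simp)
      simpa [hf₁def] using this
    have hef₁T : ∀ p ∈ T, e₁ + f₁ ∉ p := by
      intro p hp
      have := ht p hp e₁ (by simp)
      simpa [hf₁def, add_assoc] using this
    have hβe₁u : β e₁ (u' : V) = 0 := u'.2
    have hβef : β e₁ f₁ = 1 := by
      simp [hf₁def, map_add, map_smul, hf₀, hβe₁u, smul_eq_mul]
    have hβfe : β f₁ e₁ = -1 := by rw [hskew, hβef]
    -- the symplectic complement U
    set U : Submodule 𝔽 V := K ⊓ LinearMap.ker (β f₁) with hUdef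
    have hmemU : ∀ v : V, v ∈ U ↔ β e₁ v = 0 ∧ β f₁ v = 0 := by
      intro v
      simp [hUdef, Submodule.mem_inf, LinearMap.mem_ker, hKdef]
    have hUrank : finrank 𝔽 U = 2 * k := by
      set Φ : V →ₗ[𝔽] 𝔽 × 𝔽 := (β e₁).prod (β f₁) with hΦdef
      have hker : LinearMap.ker Φ = U := by rw [hΦdef, LinearMap.ker_prod]
      have hsurj : Function.Surjective Φ := by
        rintro ⟨a, b⟩
        refine ⟨a • f₁ - b • e₁, ?_⟩
        simp [hΦdef, LinearMap.prod_apply, map_sub, map_smul, hβef, hβfe, halt,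
          smul_eq_mul, Prod.ext_iff]
      have h1 := LinearMap.finrank_range_add_finrank_ker Φ
      rw [LinearMap.range_eq_top.mpr hsurj, finrank_top, hker, hdim] at h1
      have h2 : finrank 𝔽 (𝔽 × 𝔽) = 2 := by
        rw [Module.finrank_prod, Module.finrank_self]
      rw [h2] at h1
      omega
    -- projection onto U
    set P : V →ₗ[𝔽] V :=
      LinearMap.id - (β e₁).smulRight f₁ + (β f₁).smulRight e₁ with hPdef
    have hPapply : ∀ v : V, P v = v - β e₁ v • f₁ + β f₁ v • e₁ := by
      intro v
      simp [hPdef, LinearMap.add_apply, LinearMap.sub_apply, LinearMap.smulRight_apply]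
    have hPU : ∀ v : V, P v ∈ U := by
      intro v
      rw [hmemU]
      constructor
      · rw [hPapply]
        simp [map_add, map_sub, map_smul, hβef, halt, smul_eq_mul]
      · rw [hPapply]
        simp only [map_add, map_sub, map_smul, smul_eq_mul, halt, hβfe]
        ring
    set Pu : V →ₗ[𝔽] U := P.codRestrict U hPU with hPudef
    have hPucoe : ∀ v : V, (Pu v : V) = P v := fun v => rfl
    have hPe₁ : P e₁ = 0 := by
      rw [hPapply]
      simp [halt, hβfe, neg_smul]
    have hPf₁ : P f₁ = 0 := by
      rw [hPapply]
      simp [halt, hβef]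
    have hPfix : ∀ v ∈ U, P v = v := by
      intro v hv
      obtain ⟨h1, h2⟩ := (hmemU v).mp hv
      rw [hPapply, h1, h2]
      simp
    have hdecomp : ∀ v : V, v = β e₁ v • f₁ - β f₁ v • e₁ + P v := by
      intro v
      rw [hPapply]
      abel
    -- the restricted form
    set β' : U →ₗ[𝔽] U →ₗ[𝔽] 𝔽 := β.compl₁₂ U.subtype U.subtype with hβ'def
    have hβ'apply : ∀ x y : U, β' x y = β (x : V) (y : V) := fun x y => rfl
    have halt' : ∀ x : U, β' x x = 0 := fun x => halt (x : V)
    have hnd' : ∀ x : U, (∀ y : U, β' x y = 0) → x = 0 := by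
      intro x hx
      have h0 : ∀ w0 : V, β (x : V) w0 = 0 := by
        intro w0
        obtain ⟨h1, h2⟩ := (hmemU (x : V)).mp x.2
        have hxe : β (x : V) e₁ = 0 := by rw [hskew, h1, neg_zero]
        have hxf : β (x : V) f₁ = 0 := by rw [hskew, h2, neg_zero]
        calc β (x : V) w0 = β (x : V) (β e₁ w0 • f₁ - β f₁ w0 • e₁ + P w0) := by
              rw [← hdecomp]
          _ = 0 := by
              rw [map_add, map_sub, map_smul, map_smul]
              have := hx ⟨P w0, hPU w0⟩
              rw [hβ'apply] at this
              simp [hxe, hxf, this]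
      have : (x : V) = 0 := hnd _ h0
      exact Subtype.ext this
    -- the pushed-forward obstacle subspaces
    set Dfun : V → Submodule 𝔽 V → Submodule 𝔽 U := fun l W =>
      Submodule.map Pu (W ⊓ (Submodule.span 𝔽 {l} ⊔ U)) with hDdef
    have hDle : ∀ l : V, β l l = 0 → (∀ v ∈ U, β l v = 0) → (∀ p ∈ T, l ∉ p) →
        ∀ W ∈ Ω, finrank 𝔽 (Dfun l W) ≤ k := by
      intro l hll hlU hlT W hW
      have hsub : Submodule.span 𝔽 {l} ⊔ U ≤ LinearMap.ker (β l) := by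
        apply sup_le
        · rw [Submodule.span_le, Set.singleton_subset_iff]
          exact LinearMap.mem_ker.mpr hll
        · intro v hv
          exact LinearMap.mem_ker.mpr (hlU v hv)
      have h1 : finrank 𝔽 (Dfun l W) ≤ finrank 𝔽 (W ⊓ (Submodule.span 𝔽 {l} ⊔ U) : Submodule 𝔽 V) :=
        Submodule.finrank_map_le _ _
      have h2 : finrank 𝔽 (W ⊓ (Submodule.span 𝔽 {l} ⊔ U) : Submodule 𝔽 V) ≤
          finrank 𝔽 (W ⊓ LinearMap.ker (β l) : Submodule 𝔽 V) :=
        Submodule.finrank_mono (inf_le_inf_left _ hsub)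
      by_cases hWk : finrank 𝔽 W ≤ k
      · have h3 : finrank 𝔽 (W ⊓ LinearMap.ker (β l) : Submodule 𝔽 V) ≤ finrank 𝔽 W :=
          Submodule.finrank_mono inf_le_left
        omega
      · have hWk1 : finrank 𝔽 W = k + 1 := by
          have := hΩ W hW; omega
        have horthT : LinearMap.BilinForm.orthogonal β W ∈ T := by
          apply Finset.mem_insert_of_mem
          apply Finset.mem_union_right
          have hWf : W ∈ Ω.filter (fun W : Submodule 𝔽 V => finrank 𝔽 W = k + 1) := by
            rw [Finset.mem_filter]; exact ⟨hW, hWk1⟩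
          exact Finset.mem_image_of_mem _ hWf
        have hlorth := hlT _ horthT
        rw [LinearMap.BilinForm.mem_orthogonal_iff] at hlorth
        push_neg at hlorth
        obtain ⟨w0, hw0W, hw0⟩ := hlorth
        have hlw0 : β l w0 ≠ 0 := by
          rw [hskew]
          exact neg_ne_zero.mpr hw0
        have hlt : (W ⊓ LinearMap.ker (β l) : Submodule 𝔽 V) < W := by
          rw [lt_iff_le_and_ne]
          refine ⟨inf_le_left, ?_⟩
          intro h
          have : w0 ∈ W ⊓ LinearMap.ker (β l) := by rw [h]; exact hw0W
          exact hlw0 (LinearMap.mem_ker.mp this.2)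
        have h3 := Submodule.finrank_lt_finrank_of_lt hlt
        omega
    have hlUe₁ : ∀ v ∈ U, β e₁ v = 0 := fun v hv => ((hmemU v).mp hv).1
    have hlUf₁ : ∀ v ∈ U, β f₁ v = 0 := fun v hv => ((hmemU v).mp hv).2
    have hlUef : ∀ v ∈ U, β (e₁ + f₁) v = 0 := by
      intro v hv
      rw [map_add, LinearMap.add_apply, hlUe₁ v hv, hlUf₁ v hv, add_zero]
    set Ω'' : Finset (Submodule 𝔽 U) :=
      (Ω.image (Dfun e₁)) ∪ (Ω.image (Dfun f₁)) ∪ (Ω.image (Dfun (e₁ + f₁))) with hΩ''def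
    have hΩ''le : ∀ q ∈ Ω'', finrank 𝔽 q ≤ k := by
      intro q hq
      rcases Finset.mem_union.mp hq with h | h
      · rcases Finset.mem_union.mp h with h | h
        · obtain ⟨W, hW, rfl⟩ := Finset.mem_image.mp h
          exact hDle e₁ (halt e₁) hlUe₁ he₁ W hW
        · obtain ⟨W, hW, rfl⟩ := Finset.mem_image.mp h
          exact hDle f₁ (halt f₁) hlUf₁ hf₁T W hW
      · obtain ⟨W, hW, rfl⟩ := Finset.mem_image.mp h
        exact hDle (e₁ + f₁) (halt _) hlUef hef₁T W hW
    -- apply induction hypothesis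
    obtain ⟨c, hc1, hc2, hc3, hc4⟩ := IH U β' hUrank halt' hnd' Ω'' hΩ''le
    -- facts about β against U
    have hce : ∀ x : U, β e₁ (x : V) = 0 := fun x => ((hmemU _).mp x.2).1
    have hcf : ∀ x : U, β f₁ (x : V) = 0 := fun x => ((hmemU _).mp x.2).2
    have hxe : ∀ x : U, β (x : V) e₁ = 0 := fun x => by rw [hskew, hce, neg_zero]
    have hxf : ∀ x : U, β (x : V) f₁ = 0 := fun x => by rw [hskew, hcf, neg_zero]
    -- the new basis family
    set g : Fin (k + 1) → V := Fin.cons e₁ (fun i => ((c (Sum.inl i) : U) : V)) with hgdef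
    set h : Fin (k + 1) → V := Fin.cons f₁ (fun i => ((c (Sum.inr i) : U) : V)) with hhdef
    set v : Fin (k + 1) ⊕ Fin (k + 1) → V := Sum.elim g h with hvdef
    have hv_l0 : v (Sum.inl 0) = e₁ := by simp [hvdef, hgdef]
    have hv_r0 : v (Sum.inr 0) = f₁ := by simp [hvdef, hhdef]
    have hv_ls : ∀ i : Fin k, v (Sum.inl i.succ) = ((c (Sum.inl i) : U) : V) := by
      intro i; simp [hvdef, hgdef, Fin.cons_succ]
    have hv_rs : ∀ i : Fin k, v (Sum.inr i.succ) = ((c (Sum.inr i) : U) : V) := by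
      intro i; simp [hvdef, hhdef, Fin.cons_succ]
    -- spanning
    have hUle : U ≤ Submodule.span 𝔽 (Set.range v) := by
      have h1 : U = Submodule.map U.subtype (Submodule.span 𝔽 (Set.range c)) := by
        rw [c.span_eq, Submodule.map_subtype_top]
      rw [h1, Submodule.map_span]
      apply Submodule.span_le.mpr
      rintro x ⟨y, ⟨j, rfl⟩, rfl⟩
      rcases j with i | i
      · exact Submodule.subset_span ⟨Sum.inl i.succ, hv_ls i⟩
      · exact Submodule.subset_span ⟨Sum.inr i.succ, hv_rs i⟩
    have hspan : ⊤ ≤ Submodule.span 𝔽 (Set.range v) := by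
      intro x _
      have he₁' : e₁ ∈ Submodule.span 𝔽 (Set.range v) :=
        Submodule.subset_span ⟨Sum.inl 0, hv_l0⟩
      have hf₁' : f₁ ∈ Submodule.span 𝔽 (Set.range v) :=
        Submodule.subset_span ⟨Sum.inr 0, hv_r0⟩
      rw [hdecomp x]
      exact Submodule.add_mem _ (Submodule.sub_mem _ (Submodule.smul_mem _ _ hf₁')
        (Submodule.smul_mem _ _ he₁')) (hUle (hPU x))
    -- linear independence
    have hindep : LinearIndependent 𝔽 v := by
      rw [Fintype.linearIndependent_iff]
      intro g0 hsum
      rw [Fintype.sum_sum_type, Fin.sum_univ_succ, Fin.sum_univ_succ] at hsum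
      simp only [hvdef, Sum.elim_inl, Sum.elim_inr, hgdef, hhdef, Fin.cons_zero,
        Fin.cons_succ] at hsum
      set w1 : U := (∑ i : Fin k, g0 (Sum.inl i.succ) • c (Sum.inl i)) +
        (∑ i : Fin k, g0 (Sum.inr i.succ) • c (Sum.inr i)) with hw1def
      have hw1coe : (w1 : V) =
          (∑ i : Fin k, g0 (Sum.inl i.succ) • ((c (Sum.inl i) : U) : V)) +
          (∑ i : Fin k, g0 (Sum.inr i.succ) • ((c (Sum.inr i) : U) : V)) := by
        rw [hw1def]
        push_cast
        rfl
      have hb0 : g0 (Sum.inr 0) = 0 := by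
        have hb := congrArg (β e₁) hsum
        simp only [map_add, map_smul, map_sum, LinearMap.map_smul, halt, hβef, hce,
          smul_eq_mul, mul_zero, mul_one, Finset.sum_const_zero, add_zero, zero_add,
          map_zero] at hb
        simpa using hb
      have ha0 : g0 (Sum.inl 0) = 0 := by
        have hb := congrArg (β f₁) hsum
        simp only [map_add, map_smul, map_sum, halt, hβfe, hcf,
          smul_eq_mul, mul_zero, mul_neg, mul_one, Finset.sum_const_zero, add_zero,
          zero_add, map_zero] at hb
        have hneg : -g0 (Sum.inl 0) = 0 := by simpa using hb
        exact neg_eq_zero.mp hneg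
      rw [ha0, hb0, zero_smul, zero_smul, zero_add, zero_add] at hsum
      have hw10 : w1 = 0 := by
        apply Subtype.ext
        rw [hw1coe]
        simpa using hsum
      have hall := Fintype.linearIndependent_iff.mp c.linearIndependent
        (Sum.elim (fun i => g0 (Sum.inl i.succ)) (fun i => g0 (Sum.inr i.succ)))
        (by
          rw [Fintype.sum_sum_type]
          simp only [Sum.elim_inl, Sum.elim_inr]
          rw [← hw1def, hw10])
      intro i
      rcases i with i | i
      · refine Fin.cases ?_ ?_ i
        · exact ha0
        · intro i'; exact hall (Sum.inl i')
      · refine Fin.cases ?_ ?_ i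
        · exact hb0
        · intro i'; exact hall (Sum.inr i')
    set b : Basis (Fin (k + 1) ⊕ Fin (k + 1)) 𝔽 V := Basis.mk hindep hspan with hbdef
    have hbv : ∀ j, b j = v j := fun j => Basis.mk_apply hindep hspan j
    have hbl0 : b (Sum.inl 0) = e₁ := by rw [hbv]; exact hv_l0
    have hbr0 : b (Sum.inr 0) = f₁ := by rw [hbv]; exact hv_r0
    have hbls : ∀ i : Fin k, b (Sum.inl i.succ) = ((c (Sum.inl i) : U) : V) := by
      intro i; rw [hbv]; exact hv_ls i
    have hbrs : ∀ i : Fin k, b (Sum.inr i.succ) = ((c (Sum.inr i) : U) : V) := by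
      intro i; rw [hbv]; exact hv_rs i
    -- the bilinear relations
    have hb1 : ∀ i j, β (b (Sum.inl i)) (b (Sum.inl j)) = 0 := by
      intro i j
      refine Fin.cases ?_ ?_ i
      · refine Fin.cases ?_ ?_ j
        · rw [hbl0]; exact halt e₁
        · intro j'; rw [hbl0, hbls]; exact hce _
      · intro i'
        refine Fin.cases ?_ ?_ j
        · rw [hbls, hbl0]; exact hxe _
        · intro j'; rw [hbls, hbls]; exact hc1 i' j'
    have hb2 : ∀ i j, β (b (Sum.inr i)) (b (Sum.inr j)) = 0 := by
      intro i j
      refine Fin.cases ?_ ?_ i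
      · refine Fin.cases ?_ ?_ j
        · rw [hbr0]; exact halt f₁
        · intro j'; rw [hbr0, hbrs]; exact hcf _
      · intro i'
        refine Fin.cases ?_ ?_ j
        · rw [hbrs, hbr0]; exact hxf _
        · intro j'; rw [hbrs, hbrs]; exact hc2 i' j'
    have hb3 : ∀ i j, β (b (Sum.inl i)) (b (Sum.inr j)) = if i = j then 1 else 0 := by
      intro i j
      refine Fin.cases ?_ ?_ i
      · refine Fin.cases ?_ ?_ j
        · rw [hbl0, hbr0, if_pos rfl]; exact hβef
        · intro j'
          rw [hbl0, hbrs, if_neg (fun hc => Fin.succ_ne_zero j' hc.symm)]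
          exact hce _
      · intro i'
        refine Fin.cases ?_ ?_ j
        · rw [hbls, hbr0, if_neg (Fin.succ_ne_zero i')]
          exact hxf _
        · intro j'
          rw [hbls, hbrs]
          simp only [Fin.succ_inj]
          exact hc3 i' j'
    refine ⟨b, hb1, hb2, hb3, ?_⟩
    -- the avoidance property
    intro lam hlam W hW
    have hWT : W ∈ T := Finset.mem_insert_of_mem (Finset.mem_union_left _ hW)
    have h0 := hlam 0
    rw [hbl0, hbr0] at h0
    have hlam0T : ∀ p ∈ T, lam 0 ∉ p := by
      rcases h0 with hh | hh | hh <;> intro p hp <;> rw [hh]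
      · exact he₁ p hp
      · exact hf₁T p hp
      · exact hef₁T p hp
    have hPlam0 : P (lam 0) = 0 := by
      rcases h0 with hh | hh | hh <;> rw [hh]
      · exact hPe₁
      · exact hPf₁
      · rw [map_add, hPe₁, hPf₁, add_zero]
    have hD₀ : Dfun (lam 0) W ∈ Ω'' := by
      rw [hΩ''def]
      rcases h0 with hh | hh | hh <;> rw [hh]
      · exact Finset.mem_union_left _ (Finset.mem_union_left _ (Finset.mem_image_of_mem _ hW))
      · exact Finset.mem_union_left _ (Finset.mem_union_right _ (Finset.mem_image_of_mem _ hW))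
      · exact Finset.mem_union_right _ (Finset.mem_image_of_mem _ hW)
    have hlamU : ∀ i : Fin k, lam i.succ ∈ U := by
      intro i
      rcases hlam i.succ with hh | hh | hh <;> rw [hh]
      · rw [hbls]; exact (c (Sum.inl i)).2
      · rw [hbrs]; exact (c (Sum.inr i)).2
      · rw [hbls, hbrs]; exact U.add_mem (c (Sum.inl i)).2 (c (Sum.inr i)).2
    set lam' : Fin k → U := fun i => ⟨lam i.succ, hlamU i⟩ with hlam'def
    have hlam'pat : ∀ i, lam' i = c (Sum.inl i) ∨ lam' i = c (Sum.inr i) ∨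
        lam' i = c (Sum.inl i) + c (Sum.inr i) := by
      intro i
      rcases hlam i.succ with hh | hh | hh
      · left; apply Subtype.ext; rw [hlam'def]; rw [hbls] at hh; exact hh
      · right; left; apply Subtype.ext; rw [hlam'def]; rw [hbrs] at hh; exact hh
      · right; right; apply Subtype.ext; rw [hlam'def]; rw [hbls, hbrs] at hh
        simpa using hh
    have h4 := hc4 lam' hlam'pat (Dfun (lam 0) W) hD₀
    rw [Submodule.eq_bot_iff]
    intro x hx
    rw [Submodule.mem_inf] at hx
    obtain ⟨hx1, hx2⟩ := hx
    have hle : Submodule.span 𝔽 (Set.range lam) ≤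
        Submodule.span 𝔽 {lam 0} ⊔
          Submodule.map U.subtype (Submodule.span 𝔽 (Set.range lam')) := by
      apply Submodule.span_le.mpr
      rintro y ⟨i, rfl⟩
      refine Fin.cases ?_ ?_ i
      · exact Submodule.mem_sup_left (Submodule.mem_span_singleton_self _)
      · intro i'
        have hmm : U.subtype (lam' i') ∈
            Submodule.map U.subtype (Submodule.span 𝔽 (Set.range lam')) :=
          Submodule.mem_map_of_mem (Submodule.subset_span (Set.mem_range_self i'))
        exact Submodule.mem_sup_right hmm
    obtain ⟨y, hy, z, hz, hyz⟩ := Submodule.mem_sup.mp (hle hx1)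
    obtain ⟨a, rfl⟩ := Submodule.mem_span_singleton.mp hy
    obtain ⟨uu, huu, rfl⟩ := Submodule.mem_map.mp hz
    have hPx : Pu x = uu := by
      apply Subtype.ext
      rw [hPucoe, ← hyz, map_add, map_smul, hPlam0, smul_zero, zero_add]
      exact hPfix _ uu.2
    have hxmem : x ∈ W ⊓ (Submodule.span 𝔽 {lam 0} ⊔ U) := by
      refine Submodule.mem_inf.mpr ⟨hx2, ?_⟩
      rw [← hyz]
      exact Submodule.add_mem _
        (Submodule.mem_sup_left (Submodule.smul_mem _ _ (Submodule.mem_span_singleton_self _)))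
        (Submodule.mem_sup_right uu.2)
    have huuD : uu ∈ Dfun (lam 0) W := Submodule.mem_map.mpr ⟨x, hxmem, hPx⟩
    have huu0 : uu = 0 := by
      have hm : uu ∈ Submodule.span 𝔽 (Set.range lam') ⊓ Dfun (lam 0) W :=
        Submodule.mem_inf.mpr ⟨huu, huuD⟩
      rw [h4] at hm
      exact (Submodule.mem_bot 𝔽).mp hm
    have hx0 : x = a • lam 0 := by rw [← hyz, huu0]; simp
    by_cases ha : a = 0
    · rw [hx0, ha, zero_smul]
    · exfalso
      apply hlam0T W hWT
      have hs : a⁻¹ • x ∈ W := Submodule.smul_mem _ _ hx2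
      rwa [hx0, smul_smul, inv_mul_cancel₀ ha, one_smul] at hs



/-- Let `(V, β)` be a symplectic space of dimension `2k` over a subfield `𝔽` of `ℝ` and let
`Ω` be a finite collection of subspaces of `V`, each of dimension at most `k`.  Then there is
a symplectic basis `e₁, f̂₁, …, e_k, f̂_k` of `V` (here `b (.inl i) = eᵢ`, `b (.inr i) = f̂ᵢ`)
such that every subspace associated to it — every span of vectors `λ₁, …, λ_k` with
`λᵢ ∈ {eᵢ, f̂ᵢ, eᵢ + f̂ᵢ}` — has trivial intersection with every `W ∈ Ω`. -/
theorem exists_symplectic_basis_associated_subspaces_avoiding_Omega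
    (𝔽 : Subfield ℝ) (V : Type) [AddCommGroup V] [Module 𝔽 V] [FiniteDimensional 𝔽 V]
    (k : ℕ) (hdim : finrank 𝔽 V = 2 * k)
    (β : V →ₗ[𝔽] V →ₗ[𝔽] 𝔽)
    (halt : ∀ v : V, β v v = 0)
    (hnd : ∀ v : V, (∀ w : V, β v w = 0) → v = 0)
    (Ω : Finset (Submodule 𝔽 V)) (hΩ : ∀ W ∈ Ω, finrank 𝔽 W ≤ k) :
    ∃ b : Basis (Fin k ⊕ Fin k) 𝔽 V,
      (∀ i j, β (b (Sum.inl i)) (b (Sum.inl j)) = 0) ∧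
      (∀ i j, β (b (Sum.inr i)) (b (Sum.inr j)) = 0) ∧
      (∀ i j, β (b (Sum.inl i)) (b (Sum.inr j)) = if i = j then 1 else 0) ∧
      ∀ lam : Fin k → V,
        (∀ i, lam i = b (Sum.inl i) ∨ lam i = b (Sum.inr i) ∨
          lam i = b (Sum.inl i) + b (Sum.inr i)) →
        ∀ W ∈ Ω, Submodule.span 𝔽 (Set.range lam) ⊓ W = ⊥ := by
  exact key 𝔽 k V β hdim halt hnd Ω hΩ
end

section
/- Let k ≥ 1 be an integer, let m_1, …, m_k be nonzero integers, let H be the generalized Heisenberg group of rank k with parameters m_1, …, m_k, and let A be the right ℤH-module presented by generators a_1, a_2 and relations a_1·z = a_1 + a_2, a_2·z = a_1 + 2a_2, and a_i·y_j = a_i + a_i·x_j for i ∈ {1,2} and 1 ≤ j ≤ k. Let χ : H → (ℝ,+) be a group homomorphism and suppose that for some index i ∈ {1,…,k} the minimum of the three real numbers 0, χ(x_i), χ(y_i) is attained by exactly one of them. Then A is finitely generated as a module over the monoid ring ℤ[H_χ], where H_χ = {h ∈ H : χ(h) ≥ 0}. -/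
set_option synthInstance.maxHeartbeats 1000000
set_option maxHeartbeats 1000000

/-! Generators for the generalized Heisenberg group of rank `k`:
`Sum.inl (Sum.inl i)` is `xᵢ`, `Sum.inl (Sum.inr i)` is `yᵢ`, and `Sum.inr ()` is `z`. -/

/-- The free-group generator `xᵢ`. -/
def heisX {k : ℕ} (i : Fin k) : FreeGroup ((Fin k ⊕ Fin k) ⊕ Unit) :=
  FreeGroup.of (Sum.inl (Sum.inl i))

/-- The free-group generator `yᵢ`. -/
def heisY {k : ℕ} (i : Fin k) : FreeGroup ((Fin k ⊕ Fin k) ⊕ Unit) :=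
  FreeGroup.of (Sum.inl (Sum.inr i))

/-- The free-group generator `z`. -/
def heisZ {k : ℕ} : FreeGroup ((Fin k ⊕ Fin k) ⊕ Unit) :=
  FreeGroup.of (Sum.inr ())

open scoped commutatorElement

/-- The relators of the generalized Heisenberg group of rank `k` with parameters `m`. -/
def heisenbergRels (k : ℕ) (m : Fin k → ℤ) : Set (FreeGroup ((Fin k ⊕ Fin k) ⊕ Unit)) :=
  {r | (∃ i j : Fin k, r = ⁅heisX i, heisX j⁆) ∨ (∃ i j : Fin k, r = ⁅heisY i, heisY j⁆) ∨
    (∃ i j : Fin k, r = ⁅heisX i, heisY j⁆ * (heisZ ^ (if i = j then m i else 0))⁻¹) ∨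
    (∃ i : Fin k, r = ⁅heisX i, heisZ⁆) ∨ (∃ i : Fin k, r = ⁅heisY i, heisZ⁆)}

/-- The generalized Heisenberg group of rank `k` with parameters `m`. -/
abbrev Heisenberg (k : ℕ) (m : Fin k → ℤ) : Type :=
  PresentedGroup (heisenbergRels k m)

/-- The image of the generator `xᵢ` in the Heisenberg group. -/
def hXg (k : ℕ) (m : Fin k → ℤ) (i : Fin k) : Heisenberg k m :=
  PresentedGroup.of (Sum.inl (Sum.inl i))

/-- The image of the generator `yᵢ` in the Heisenberg group. -/
def hYg (k : ℕ) (m : Fin k → ℤ) (i : Fin k) : Heisenberg k m :=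
  PresentedGroup.of (Sum.inl (Sum.inr i))

/-- The image of the generator `z` in the Heisenberg group. -/
def hZg (k : ℕ) (m : Fin k → ℤ) : Heisenberg k m :=
  PresentedGroup.of (Sum.inr ())

/-- The integral group ring `ℤH` of the Heisenberg group `H`. -/
abbrev HZR (k : ℕ) (m : Fin k → ℤ) : Type := MonoidAlgebra ℤ (Heisenberg k m)

/-- The relators of the right `ℤH`-module `A` presented by generators `a₁ = (1,0)`,
`a₂ = (0,1)` and relations `a₁·z = a₁ + a₂`, `a₂·z = a₁ + 2a₂` and
`aᵢ·yⱼ = aᵢ + aᵢ·xⱼ`; the free right `ℤH`-module on `a₁, a₂` is `ℤH × ℤH`, viewed as a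
left module over the opposite ring `(ℤH)ᵐᵒᵖ`. -/
noncomputable def heisModRelators (k : ℕ) (m : Fin k → ℤ) : Set (HZR k m × HZR k m) :=
  {((MonoidAlgebra.of ℤ (Heisenberg k m) (hZg k m) - 1, -1) : HZR k m × HZR k m),
   ((-1, MonoidAlgebra.of ℤ (Heisenberg k m) (hZg k m) - 2) : HZR k m × HZR k m)} ∪
  (Set.range fun j : Fin k =>
    ((MonoidAlgebra.of ℤ (Heisenberg k m) (hYg k m j) - 1 -
        MonoidAlgebra.of ℤ (Heisenberg k m) (hXg k m j), 0) : HZR k m × HZR k m)) ∪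
  (Set.range fun j : Fin k =>
    ((0, MonoidAlgebra.of ℤ (Heisenberg k m) (hYg k m j) - 1 -
        MonoidAlgebra.of ℤ (Heisenberg k m) (hXg k m j)) : HZR k m × HZR k m))

/-- The submodule of relations, a right `ℤH`-submodule (i.e. an `(ℤH)ᵐᵒᵖ`-submodule) of the
free right module `ℤH × ℤH`. -/
noncomputable def heisModSub (k : ℕ) (m : Fin k → ℤ) :
    Submodule (HZR k m)ᵐᵒᵖ (HZR k m × HZR k m) :=
  Submodule.span (HZR k m)ᵐᵒᵖ (heisModRelators k m)

/-- The right `ℤH`-module `A` presented by generators `a₁, a₂` and relations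
`a₁·z = a₁ + a₂`, `a₂·z = a₁ + 2a₂`, `aᵢ·yⱼ = aᵢ + aᵢ·xⱼ`. -/
abbrev HeisMod (k : ℕ) (m : Fin k → ℤ) : Type :=
  (HZR k m × HZR k m) ⧸ heisModSub k m

/-- The action of the Heisenberg group `H` on the abelian group `A = HeisMod k m` coming
from the right module structure (`h` acts as right multiplication by `h⁻¹`, so that this is
a homomorphism), expressed as `H →* MulAut (Multiplicative A)` in order to form the split
extension `A ⋊ H`. -/
noncomputable def heisAction (k : ℕ) (m : Fin k → ℤ) :
    Heisenberg k m →* MulAut (Multiplicative (HeisMod k m)) where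
  toFun h :=
    { toFun := fun a => Multiplicative.ofAdd
        (MulOpposite.op (MonoidAlgebra.of ℤ (Heisenberg k m) h⁻¹) • a.toAdd)
      invFun := fun a => Multiplicative.ofAdd
        (MulOpposite.op (MonoidAlgebra.of ℤ (Heisenberg k m) h) • a.toAdd)
      left_inv := fun a => by
        simp [smul_smul, ← MulOpposite.op_mul, ← map_mul, ← MonoidAlgebra.one_def]
      right_inv := fun a => by
        simp [smul_smul, ← MulOpposite.op_mul, ← map_mul, ← MonoidAlgebra.one_def]
      map_mul' := fun a b => by
        simp [smul_add] }
  map_one' := by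
    ext a
    simp [← MonoidAlgebra.one_def]
  map_mul' := fun g h => by
    ext a
    simp [mul_inv_rev, smul_smul, ← MulOpposite.op_mul, MonoidAlgebra.single_mul_single]


section HeisAux

open MonoidAlgebra MulOpposite

variable {k : ℕ} {m : Fin k → ℤ}

private lemma heis_rel_one {r : FreeGroup ((Fin k ⊕ Fin k) ⊕ Unit)}
    (hr : r ∈ heisenbergRels k m) : PresentedGroup.mk (heisenbergRels k m) r = 1 :=
  (QuotientGroup.eq_one_iff r).mpr (Subgroup.subset_normalClosure hr)

private lemma heis_commute_XX (i j : Fin k) : Commute (hXg k m i) (hXg k m j) := by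
  have h := heis_rel_one (m := m) (Or.inl ⟨i, j, rfl⟩)
  rw [map_commutatorElement] at h
  exact commutatorElement_eq_one_iff_commute.mp h

private lemma heis_commute_YY (i j : Fin k) : Commute (hYg k m i) (hYg k m j) := by
  have h := heis_rel_one (m := m) (Or.inr (Or.inl ⟨i, j, rfl⟩))
  rw [map_commutatorElement] at h
  exact commutatorElement_eq_one_iff_commute.mp h

private lemma heis_xy (i j : Fin k) :
    ⁅hXg k m i, hYg k m j⁆ = hZg k m ^ (if i = j then m i else 0) := by
  have h := heis_rel_one (m := m) (Or.inr (Or.inr (Or.inl ⟨i, j, rfl⟩)))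
  rw [map_mul, map_inv, map_zpow, map_commutatorElement] at h
  exact mul_inv_eq_one.mp h

private lemma heis_commute_XY {i j : Fin k} (hij : i ≠ j) :
    Commute (hXg k m i) (hYg k m j) := by
  have h := heis_xy (m := m) i j
  rw [if_neg hij, zpow_zero] at h
  exact commutatorElement_eq_one_iff_commute.mp h

private lemma heis_commute_XZ (i : Fin k) : Commute (hXg k m i) (hZg k m) := by
  have h := heis_rel_one (m := m) (Or.inr (Or.inr (Or.inr (Or.inl ⟨i, rfl⟩))))
  rw [map_commutatorElement] at h
  exact commutatorElement_eq_one_iff_commute.mp h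

private lemma heis_commute_YZ (i : Fin k) : Commute (hYg k m i) (hZg k m) := by
  have h := heis_rel_one (m := m) (Or.inr (Or.inr (Or.inr (Or.inr ⟨i, rfl⟩))))
  rw [map_commutatorElement] at h
  exact commutatorElement_eq_one_iff_commute.mp h

private lemma heis_xy_rel (i : Fin k) :
    hXg k m i * hYg k m i = hZg k m ^ (m i) * (hYg k m i * hXg k m i) := by
  have h := heis_xy (m := m) i i
  rw [if_pos rfl, commutatorElement_def] at h
  calc hXg k m i * hYg k m i
      = hXg k m i * hYg k m i * (hXg k m i)⁻¹ * (hYg k m i)⁻¹ * (hYg k m i * hXg k m i) := by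
        group
    _ = hZg k m ^ (m i) * (hYg k m i * hXg k m i) := by rw [h]

/-- From `x*y = z^c*(y*x)` and `z` commuting with `y`, get `x * y^n = z^(c*n) * (y^n * x)`. -/
private lemma conj_zpow_rel {G : Type*} [Group G] {x y z : G} {c : ℤ}
    (hxy : x * y = z ^ c * (y * x)) (hzy : Commute z y) (n : ℤ) :
    x * y ^ n = z ^ (c * n) * (y ^ n * x) := by
  have hconj : x * y * x⁻¹ = z ^ c * y := by rw [hxy]; group
  have h2 := map_zpow (MulAut.conj x) y n
  rw [MulAut.conj_apply, MulAut.conj_apply] at h2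
  rw [hconj] at h2
  calc x * y ^ n = (x * y ^ n * x⁻¹) * x := by group
    _ = ((z ^ c) ^ n * y ^ n) * x := by rw [h2, (hzy.zpow_left c).mul_zpow]
    _ = z ^ (c * n) * (y ^ n * x) := by rw [← zpow_mul]; group

/-- The class of the generator `a₁ · h` in the module `A`. -/
private noncomputable def e1 (h : Heisenberg k m) : HeisMod k m :=
  Submodule.Quotient.mk (MonoidAlgebra.of ℤ (Heisenberg k m) h, 0)

/-- The class of the generator `a₂ · h` in the module `A`. -/
private noncomputable def e2 (h : Heisenberg k m) : HeisMod k m :=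
  Submodule.Quotient.mk (0, MonoidAlgebra.of ℤ (Heisenberg k m) h)

private lemma smul_e1 (g h : Heisenberg k m) :
    MulOpposite.op (MonoidAlgebra.of ℤ (Heisenberg k m) g) • e1 h = e1 (h * g) := by
  rw [e1, e1, ← Submodule.Quotient.mk_smul]
  congr 1
  rw [Prod.smul_mk, smul_zero, op_smul_eq_mul, ← map_mul]

private lemma smul_e2 (g h : Heisenberg k m) :
    MulOpposite.op (MonoidAlgebra.of ℤ (Heisenberg k m) g) • e2 h = e2 (h * g) := by
  rw [e2, e2, ← Submodule.Quotient.mk_smul]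
  congr 1
  rw [Prod.smul_mk, smul_zero, op_smul_eq_mul, ← map_mul]

private lemma mk_eq_of_rel {v w : HZR k m × HZR k m} (r : HZR k m × HZR k m)
    (hr : r ∈ heisModRelators k m) (h : Heisenberg k m)
    (hvw : v - w = MulOpposite.op (MonoidAlgebra.of ℤ (Heisenberg k m) h) • r) :
    (Submodule.Quotient.mk v : HeisMod k m) = Submodule.Quotient.mk w := by
  rw [Submodule.Quotient.eq, hvw]
  exact Submodule.smul_mem _ _ (Submodule.subset_span hr)

private lemma e1_z (h : Heisenberg k m) : e1 (hZg k m * h) = e1 h + e2 h := by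
  have hsum : e1 h + e2 h = (Submodule.Quotient.mk
      ((MonoidAlgebra.of ℤ (Heisenberg k m) h, MonoidAlgebra.of ℤ (Heisenberg k m) h) :
        HZR k m × HZR k m) : HeisMod k m) := by
    rw [e1, e2, ← Submodule.Quotient.mk_add, Prod.mk_add_mk, add_zero, zero_add]
  rw [e1, hsum]
  apply mk_eq_of_rel _ (Or.inl (Or.inl (Set.mem_insert _ _))) h
  rw [Prod.smul_mk, Prod.mk_sub_mk, Prod.mk.injEq]
  constructor
  · rw [op_smul_eq_mul, sub_mul, one_mul, ← map_mul]
  · rw [op_smul_eq_mul, neg_one_mul, zero_sub]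

private lemma e2_z (h : Heisenberg k m) : e2 (hZg k m * h) = e1 h + (e2 h + e2 h) := by
  have hsum : e1 h + (e2 h + e2 h) = (Submodule.Quotient.mk
      ((MonoidAlgebra.of ℤ (Heisenberg k m) h,
        MonoidAlgebra.of ℤ (Heisenberg k m) h + MonoidAlgebra.of ℤ (Heisenberg k m) h) :
        HZR k m × HZR k m) : HeisMod k m) := by
    rw [e1, e2, ← Submodule.Quotient.mk_add, ← Submodule.Quotient.mk_add, Prod.mk_add_mk,
      Prod.mk_add_mk, add_zero, zero_add, add_zero]
  rw [e2, hsum]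
  apply mk_eq_of_rel _ (Or.inl (Or.inl (Set.mem_insert_of_mem _ rfl))) h
  rw [Prod.smul_mk, Prod.mk_sub_mk, Prod.mk.injEq]
  constructor
  · rw [op_smul_eq_mul, neg_one_mul, zero_sub]
  · rw [op_smul_eq_mul, sub_mul, ← map_mul, two_mul]

private lemma e1_y (j : Fin k) (h : Heisenberg k m) :
    e1 (hYg k m j * h) = e1 h + e1 (hXg k m j * h) := by
  have hsum : e1 h + e1 (hXg k m j * h) = (Submodule.Quotient.mk
      ((MonoidAlgebra.of ℤ (Heisenberg k m) h +
          MonoidAlgebra.of ℤ (Heisenberg k m) (hXg k m j * h), 0) :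
        HZR k m × HZR k m) : HeisMod k m) := by
    rw [e1, e1, ← Submodule.Quotient.mk_add, Prod.mk_add_mk, add_zero]
  rw [e1, hsum]
  apply mk_eq_of_rel _ (Or.inl (Or.inr ⟨j, rfl⟩)) h
  rw [Prod.smul_mk, Prod.mk_sub_mk, Prod.mk.injEq]
  constructor
  · rw [op_smul_eq_mul, sub_mul, sub_mul, one_mul, ← map_mul, ← map_mul, sub_sub]
  · rw [op_smul_eq_mul, zero_mul, sub_zero]

private lemma e2_y (j : Fin k) (h : Heisenberg k m) :
    e2 (hYg k m j * h) = e2 h + e2 (hXg k m j * h) := by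
  have hsum : e2 h + e2 (hXg k m j * h) = (Submodule.Quotient.mk
      ((0, MonoidAlgebra.of ℤ (Heisenberg k m) h +
          MonoidAlgebra.of ℤ (Heisenberg k m) (hXg k m j * h)) :
        HZR k m × HZR k m) : HeisMod k m) := by
    rw [e2, e2, ← Submodule.Quotient.mk_add, Prod.mk_add_mk, add_zero]
  rw [e2, hsum]
  apply mk_eq_of_rel _ (Or.inr ⟨j, rfl⟩) h
  rw [Prod.smul_mk, Prod.mk_sub_mk, Prod.mk.injEq]
  constructor
  · rw [op_smul_eq_mul, zero_mul, sub_zero]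
  · rw [op_smul_eq_mul, sub_mul, sub_mul, one_mul, ← map_mul, ← map_mul, sub_sub]
/-- Bundled context: the character `χ` and the `ℤ[H_χ]`-stable subgroup `B`. -/
private structure Ctx (k : ℕ) (m : Fin k → ℤ) where
  χ : Heisenberg k m → ℝ
  hχ : ∀ a b, χ (a * b) = χ a + χ b
  B : AddSubgroup (HeisMod k m)
  hB : ∀ h : Heisenberg k m, 0 ≤ χ h → ∀ b ∈ B,
    MulOpposite.op (MonoidAlgebra.of ℤ (Heisenberg k m) h) • b ∈ B

variable (c : Ctx k m)

private lemma Ctx.chi_one : c.χ 1 = 0 := by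
  have := c.hχ 1 1
  rw [one_mul] at this
  linarith

private lemma Ctx.chi_inv (g : Heisenberg k m) : c.χ g⁻¹ = -c.χ g := by
  have := c.hχ g⁻¹ g
  rw [inv_mul_cancel, c.chi_one] at this
  linarith

private lemma Ctx.chi_zpow (g : Heisenberg k m) (n : ℤ) : c.χ (g ^ n) = n * c.χ g := by
  let φ : Heisenberg k m →* Multiplicative ℝ :=
    { toFun := fun h => Multiplicative.ofAdd (c.χ h)
      map_one' := by show Multiplicative.ofAdd _ = 1; rw [c.chi_one]; rfl
      map_mul' := fun a b => by
        show Multiplicative.ofAdd _ = Multiplicative.ofAdd (c.χ a + c.χ b)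
        rw [c.hχ]
      }
  have h2 : Multiplicative.toAdd (φ (g ^ n)) = Multiplicative.toAdd ((φ g) ^ n) := by
    rw [map_zpow]
  rw [toAdd_zpow] at h2
  simpa [φ, zsmul_eq_mul] using h2

/-- The set of `h` with both `a₁·h` and `a₂·h` in `B`. -/
private def Ctx.C : Set (Heisenberg k m) := {h | e1 h ∈ c.B ∧ e2 h ∈ c.B}

private lemma Ctx.mul_right {h : Heisenberg k m} (hh : h ∈ c.C) {g : Heisenberg k m}
    (hg : 0 ≤ c.χ g) : h * g ∈ c.C :=
  ⟨by rw [← smul_e1]; exact c.hB g hg _ hh.1, by rw [← smul_e2]; exact c.hB g hg _ hh.2⟩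

private lemma Ctx.mul_left {g h : Heisenberg k m} (hh : h ∈ c.C) (hg : 0 ≤ c.χ g) :
    g * h ∈ c.C := by
  have heq : g * h = h * (h⁻¹ * g * h) := by group
  rw [heq]
  refine c.mul_right hh ?_
  rw [c.hχ, c.hχ, c.chi_inv]
  linarith

private lemma Ctx.zmul {h : Heisenberg k m} (hh : h ∈ c.C) : hZg k m * h ∈ c.C := by
  constructor
  · rw [e1_z]; exact add_mem hh.1 hh.2
  · rw [e2_z]; exact add_mem hh.1 (add_mem hh.2 hh.2)

private lemma Ctx.zinv_mul {h : Heisenberg k m} (hh : h ∈ c.C) : (hZg k m)⁻¹ * h ∈ c.C := by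
  set w := (hZg k m)⁻¹ * h with hw
  have hz : hZg k m * w = h := by rw [hw]; group
  have h1 : e1 h = e1 w + e2 w := by rw [← hz, e1_z]
  have h2 : e2 h = e1 w + (e2 w + e2 w) := by rw [← hz, e2_z]
  have he2 : e2 w = e2 h - e1 h := by
    have key : e1 w + (e2 w + e2 w) - (e1 w + e2 w) = e2 w := by abel
    rw [← h1, ← h2] at key
    exact key.symm
  have he1 : e1 w = e1 h - (e2 h - e1 h) := by
    rw [← he2]
    exact eq_sub_of_add_eq h1.symm
  constructor
  · rw [he1]; exact sub_mem hh.1 (sub_mem hh.2 hh.1)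
  · rw [he2]; exact sub_mem hh.2 hh.1

private lemma Ctx.zpow_mul (t : ℤ) {h : Heisenberg k m} (hh : h ∈ c.C) :
    hZg k m ^ t * h ∈ c.C := by
  induction t using Int.induction_on with
  | zero => simpa using hh
  | succ n ih =>
    have := c.zmul ih
    have heq : hZg k m ^ ((n : ℤ) + 1) * h = hZg k m * (hZg k m ^ (n : ℤ) * h) := by group
    rw [heq]
    exact this
  | pred n ih =>
    have := c.zinv_mul ih
    have heq : hZg k m ^ (-(n : ℤ) - 1) * h = (hZg k m)⁻¹ * (hZg k m ^ (-(n : ℤ)) * h) := by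
      group
    rw [heq]
    exact this

private lemma Ctx.T1 (j : Fin k) {h : Heisenberg k m} (hh : h ∈ c.C)
    (hx : hXg k m j * h ∈ c.C) : hYg k m j * h ∈ c.C := by
  constructor
  · rw [e1_y]; exact add_mem hh.1 hx.1
  · rw [e2_y]; exact add_mem hh.2 hx.2

private lemma Ctx.T2 (j : Fin k) {h : Heisenberg k m} (hh : h ∈ c.C)
    (hy : hYg k m j * h ∈ c.C) : hXg k m j * h ∈ c.C := by
  constructor
  · have : e1 (hXg k m j * h) = e1 (hYg k m j * h) - e1 h := by rw [e1_y]; abel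
    rw [this]; exact sub_mem hy.1 hh.1
  · have : e2 (hXg k m j * h) = e2 (hYg k m j * h) - e2 h := by rw [e2_y]; abel
    rw [this]; exact sub_mem hy.2 hh.2

private lemma Ctx.T3 (j : Fin k) {h : Heisenberg k m} (hx : hXg k m j * h ∈ c.C)
    (hy : hYg k m j * h ∈ c.C) : h ∈ c.C := by
  constructor
  · have : e1 h = e1 (hYg k m j * h) - e1 (hXg k m j * h) := by rw [e1_y]; abel
    rw [this]; exact sub_mem hy.1 hx.1
  · have : e2 h = e2 (hYg k m j * h) - e2 (hXg k m j * h) := by rw [e2_y]; abel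
    rw [this]; exact sub_mem hy.2 hx.2
/-- A pair of group elements behaving like `(xᵢ, yᵢ)`. -/
private structure GoodPair (c : Ctx k m) where
  x : Heisenberg k m
  y : Heisenberg k m
  cz : ℤ
  hxy : x * y = hZg k m ^ cz * (y * x)
  hzx : Commute (hZg k m) x
  hzy : Commute (hZg k m) y
  T1 : ∀ h ∈ c.C, x * h ∈ c.C → y * h ∈ c.C
  T2 : ∀ h ∈ c.C, y * h ∈ c.C → x * h ∈ c.C
  T3 : ∀ h : Heisenberg k m, x * h ∈ c.C → y * h ∈ c.C → h ∈ c.C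

variable {c}

private def GoodPair.swap (p : GoodPair c) : GoodPair c where
  x := p.y
  y := p.x
  cz := -p.cz
  hxy := by rw [p.hxy]; group
  hzx := p.hzy
  hzy := p.hzx
  T1 := p.T2
  T2 := p.T1
  T3 := fun h hx hy => p.T3 h hy hx

private lemma GoodPair.idA (p : GoodPair c) (n : ℤ) :
    p.x * p.y ^ n = hZg k m ^ (p.cz * n) * (p.y ^ n * p.x) :=
  conj_zpow_rel p.hxy p.hzy n

private lemma GoodPair.idB (p : GoodPair c) (n : ℤ) :
    p.y * p.x ^ n = hZg k m ^ (-p.cz * n) * (p.x ^ n * p.y) :=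
  conj_zpow_rel p.swap.hxy p.hzx n

/-- If `0 < χ y`, then `C` is closed under left multiplication by `x⁻¹`. -/
private lemma GoodPair.xinv_mul (p : GoodPair c) (hb : 0 < c.χ p.y)
    {h : Heisenberg k m} (hh : h ∈ c.C) : p.x⁻¹ * h ∈ c.C := by
  obtain ⟨N, hN⟩ := Archimedean.arch (c.χ p.x) hb
  have key : ∀ n : ℕ, p.y ^ (n : ℤ) * (p.x⁻¹ * h) ∈ c.C → p.x⁻¹ * h ∈ c.C := by
    intro n
    induction n with
    | zero => intro hyp; simpa using hyp
    | succ n ih =>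
      intro hyp
      have hxw : p.x * (p.y ^ (n : ℤ) * (p.x⁻¹ * h)) ∈ c.C := by
        have heq : p.x * (p.y ^ (n : ℤ) * (p.x⁻¹ * h)) =
            hZg k m ^ (p.cz * n) * (p.y ^ (n : ℤ) * h) := by
          rw [← mul_assoc, p.idA (n : ℤ)]
          group
        rw [heq]
        refine c.zpow_mul _ (c.mul_left hh ?_)
        rw [c.chi_zpow]
        positivity
      have hyw : p.y * (p.y ^ (n : ℤ) * (p.x⁻¹ * h)) ∈ c.C := by
        have heq : p.y * (p.y ^ (n : ℤ) * (p.x⁻¹ * h)) =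
            p.y ^ ((n : ℤ) + 1) * (p.x⁻¹ * h) := by group
        rw [heq]
        exact_mod_cast hyp
      exact ih (p.T3 _ hxw hyw)
  apply key N
  have heq : p.y ^ (N : ℤ) * (p.x⁻¹ * h) = (p.y ^ (N : ℤ) * p.x⁻¹) * h := by group
  rw [heq]
  refine c.mul_left hh ?_
  rw [c.hχ, c.chi_zpow, c.chi_inv]
  rw [nsmul_eq_mul] at hN
  push_cast
  linarith

/-- If `χ x < 0 < χ y`, then `C` is closed under left multiplication by `y⁻¹`. -/
private lemma GoodPair.yinv_mul_of_neg (p : GoodPair c) (ha : c.χ p.x < 0) (hb : 0 < c.χ p.y)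
    {h : Heisenberg k m} (hh : h ∈ c.C) : p.y⁻¹ * h ∈ c.C := by
  obtain ⟨N, hN⟩ := Archimedean.arch (c.χ p.y) (by linarith : (0:ℝ) < -c.χ p.x)
  have key : ∀ n : ℕ, p.x ^ (-(n : ℤ)) * (p.y⁻¹ * h) ∈ c.C → p.y⁻¹ * h ∈ c.C := by
    intro n
    induction n with
    | zero => intro hyp; simpa using hyp
    | succ n ih =>
      intro hyp
      have hyw : p.y * (p.x ^ (-((n : ℤ) + 1)) * (p.y⁻¹ * h)) ∈ c.C := by
        have heq : p.y * (p.x ^ (-((n : ℤ) + 1)) * (p.y⁻¹ * h)) =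
            hZg k m ^ (-p.cz * (-((n : ℤ) + 1))) * (p.x ^ (-((n : ℤ) + 1)) * h) := by
          rw [← mul_assoc, p.idB]
          group
        rw [heq]
        refine c.zpow_mul _ (c.mul_left hh ?_)
        rw [c.chi_zpow]
        have hfact := mul_nonneg (show (0:ℝ) ≤ (n:ℝ) + 1 by positivity)
          (show (0:ℝ) ≤ -c.χ p.x by linarith)
        push_cast
        nlinarith [hfact]
      have hstep := p.T2 _ (by exact_mod_cast hyp) hyw
      have heq2 : p.x * (p.x ^ (-((n : ℤ) + 1)) * (p.y⁻¹ * h)) =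
          p.x ^ (-(n : ℤ)) * (p.y⁻¹ * h) := by group
      rw [heq2] at hstep
      exact ih hstep
  apply key N
  have heq : p.x ^ (-(N : ℤ)) * (p.y⁻¹ * h) = (p.x ^ (-(N : ℤ)) * p.y⁻¹) * h := by group
  rw [heq]
  refine c.mul_left hh ?_
  rw [c.hχ, c.chi_zpow, c.chi_inv]
  rw [nsmul_eq_mul] at hN
  push_cast
  linarith
/-- The lattice game: if `χ x < χ y < 0` then `C` is closed under left multiplication
by all powers of `y`. -/
private lemma GoodPair.game (p : GoodPair c) (hab : c.χ p.x < c.χ p.y) (hb : c.χ p.y < 0)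
    {h : Heisenberg k m} (hh : h ∈ c.C) : ∀ β : ℤ, p.y ^ β * h ∈ c.C := by
  set a := c.χ p.x with ha_def
  set b := c.χ p.y with hb_def
  -- membership of the lattice points
  have region : ∀ α β : ℤ, 0 ≤ (α : ℝ) * a + (β : ℝ) * b →
      p.x ^ α * (p.y ^ β * h) ∈ c.C := by
    intro α β hle
    have heq : p.x ^ α * (p.y ^ β * h) = (p.x ^ α * p.y ^ β) * h := by group
    rw [heq]
    refine c.mul_left hh ?_
    rw [c.hχ, c.chi_zpow, c.chi_zpow]
    exact hle
  have rule : ∀ α β : ℤ, p.x ^ α * (p.y ^ β * h) ∈ c.C →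
      p.x ^ α * (p.y ^ (β + 1) * h) ∈ c.C → p.x ^ (α + 1) * (p.y ^ β * h) ∈ c.C := by
    intro α β h0 h1
    have hyw : p.y * (p.x ^ α * (p.y ^ β * h)) ∈ c.C := by
      have heq : p.y * (p.x ^ α * (p.y ^ β * h)) =
          hZg k m ^ (-p.cz * α) * (p.x ^ α * (p.y ^ (β + 1) * h)) := by
        rw [← mul_assoc, p.idB]
        group
      rw [heq]
      exact c.zpow_mul _ h1
    have := p.T2 _ h0 hyw
    have heq2 : p.x * (p.x ^ α * (p.y ^ β * h)) = p.x ^ (α + 1) * (p.y ^ β * h) := by group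
    rw [heq2] at this
    exact this
  -- it suffices to treat positive powers
  intro β
  rcases le_or_gt β 0 with hβ | hβ
  · have heq : p.y ^ β * h = (p.y ^ β) * h := rfl
    refine c.mul_left hh ?_
    rw [c.chi_zpow]
    have : (β : ℝ) ≤ 0 := by exact_mod_cast hβ
    nlinarith
  · -- eastward sweep
    obtain ⟨M, hM⟩ := Archimedean.arch ((β : ℝ) * (-b)) (by linarith : (0:ℝ) < b - a)
    rw [nsmul_eq_mul] at hM
    have east : ∀ s : ℕ, s ≤ M → ∀ β' : ℤ, β' ≤ (M : ℤ) + β - s →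
        p.x ^ ((s : ℤ) - (M : ℤ)) * (p.y ^ β' * h) ∈ c.C := by
      intro s
      induction s with
      | zero =>
        intro _ β' hβ'
        apply region
        have hβ'Z : β' ≤ (M : ℤ) + β := by push_cast at hβ'; linarith
        have hβ'R : (β' : ℝ) ≤ (M : ℝ) + (β : ℝ) := by exact_mod_cast hβ'Z
        have hmul : (β' : ℝ) * b ≥ ((M : ℝ) + (β : ℝ)) * b :=
          mul_le_mul_of_nonpos_right hβ'R (le_of_lt hb)
        push_cast
        nlinarith
      | succ s ih =>
        intro hs β' hβ'
        have hs' : s ≤ M := Nat.le_of_succ_le hs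
        have h0 := ih hs' β' (by push_cast at hβ' ⊢; linarith)
        have h1 := ih hs' (β' + 1) (by push_cast at hβ' ⊢; linarith)
        have := rule ((s : ℤ) - (M : ℤ)) β' h0 h1
        have hcast : ((s : ℤ) - (M : ℤ)) + 1 = ((s + 1 : ℕ) : ℤ) - (M : ℤ) := by push_cast; ring
        rw [hcast] at this
        exact this
    have := east M le_rfl β (by push_cast; linarith)
    simpa using this
/-- Full closure at the distinguished pair under the once-attained-minimum condition. -/
private lemma GoodPair.closure (p : GoodPair c)
    (hp : (0 < c.χ p.x ∧ 0 < c.χ p.y) ∨ (c.χ p.x < 0 ∧ c.χ p.x < c.χ p.y)) :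
    ∀ h ∈ c.C, p.x * h ∈ c.C ∧ p.x⁻¹ * h ∈ c.C ∧ p.y * h ∈ c.C ∧ p.y⁻¹ * h ∈ c.C := by
  intro h hh
  rcases hp with ⟨ha, hb⟩ | ⟨ha, hab⟩
  · exact ⟨c.mul_left hh ha.le, p.xinv_mul hb hh, c.mul_left hh hb.le,
      p.swap.xinv_mul ha hh⟩
  · have hxinv : p.x⁻¹ * h ∈ c.C := c.mul_left hh (by rw [c.chi_inv]; linarith)
    rcases lt_trichotomy (c.χ p.y) 0 with hb | hb | hb
    · have hy := p.game hab hb hh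
      have hy1 : p.y * h ∈ c.C := by have := hy 1; simpa using this
      have hyinv : p.y⁻¹ * h ∈ c.C := by have := hy (-1); simpa using this
      exact ⟨p.T2 _ hh hy1, hxinv, hy1, hyinv⟩
    · have hy1 : p.y * h ∈ c.C := c.mul_left hh (le_of_eq hb.symm)
      have hyinv : p.y⁻¹ * h ∈ c.C := c.mul_left hh (by rw [c.chi_inv]; linarith)
      exact ⟨p.T2 _ hh hy1, hxinv, hy1, hyinv⟩
    · have hy1 : p.y * h ∈ c.C := c.mul_left hh hb.le
      exact ⟨p.T2 _ hh hy1, hxinv, hy1, p.yinv_mul_of_neg ha hb hh⟩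

/-- Lever: closure under left multiplication by any `g₀` commuting with a positive `u`
whose inverse acts on `C`. -/
private lemma Ctx.lever {u : Heisenberg k m} (hu : 0 < c.χ u)
    (huinv : ∀ h ∈ c.C, u⁻¹ * h ∈ c.C) {g0 : Heisenberg k m} (hcomm : Commute g0 u)
    {h : Heisenberg k m} (hh : h ∈ c.C) : g0 * h ∈ c.C := by
  obtain ⟨N, hN⟩ := Archimedean.arch (-c.χ g0) hu
  have key : ∀ n : ℕ, g0 * (u ^ (n : ℤ) * h) ∈ c.C → g0 * h ∈ c.C := by
    intro n
    induction n with
    | zero => intro hyp; simpa using hyp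
    | succ n ih =>
      intro hyp
      push_cast at hyp
      have h2 := huinv _ hyp
      have heq : u⁻¹ * (g0 * (u ^ ((n : ℤ) + 1) * h)) = g0 * (u ^ (n : ℤ) * h) := by
        rw [← mul_assoc g0, (hcomm.zpow_right ((n : ℤ) + 1)).eq, ← mul_assoc g0,
          (hcomm.zpow_right (n : ℤ)).eq]
        group
      rw [heq] at h2
      exact ih h2
  apply key N
  have heq : g0 * (u ^ (N : ℤ) * h) = (g0 * u ^ (N : ℤ)) * h := by group
  rw [heq]
  refine c.mul_left hh ?_
  rw [c.hχ, c.chi_zpow]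
  rw [nsmul_eq_mul] at hN
  push_cast
  linarith
private lemma Ctx.C_eq_univ (hone : (1 : Heisenberg k m) ∈ c.C) (i : Fin k) (hmi : m i ≠ 0)
    (hmin : (0 < c.χ (hXg k m i) ∧ 0 < c.χ (hYg k m i)) ∨
      (c.χ (hXg k m i) < 0 ∧ c.χ (hXg k m i) < c.χ (hYg k m i)) ∨
      (c.χ (hYg k m i) < 0 ∧ c.χ (hYg k m i) < c.χ (hXg k m i))) :
    ∀ h : Heisenberg k m, h ∈ c.C := by
  classical
  -- χ vanishes on the center
  have hchiz : c.χ (hZg k m) = 0 := by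
    have h1 := heis_xy (m := m) i i
    rw [if_pos rfl] at h1
    have h2 : c.χ (⁅hXg k m i, hYg k m i⁆) = 0 := by
      rw [commutatorElement_def, c.hχ, c.hχ, c.hχ, c.chi_inv, c.chi_inv]; ring
    rw [h1, c.chi_zpow] at h2
    have hne : ((m i : ℝ)) ≠ 0 := Int.cast_ne_zero.mpr hmi
    exact (mul_eq_zero.mp h2).resolve_left hne
  -- the good pair at index i
  let p : GoodPair c :=
    { x := hXg k m i, y := hYg k m i, cz := m i
      hxy := heis_xy_rel i
      hzx := (heis_commute_XZ i).symm
      hzy := (heis_commute_YZ i).symm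
      T1 := fun _ hh hx => c.T1 i hh hx
      T2 := fun _ hh hy => c.T2 i hh hy
      T3 := fun _ hx hy => c.T3 i hx hy }
  have quad : ∀ h ∈ c.C,
      hXg k m i * h ∈ c.C ∧ (hXg k m i)⁻¹ * h ∈ c.C ∧
      hYg k m i * h ∈ c.C ∧ (hYg k m i)⁻¹ * h ∈ c.C := by
    rcases hmin with hc1 | hc2 | hc3
    · exact p.closure (Or.inl hc1)
    · exact p.closure (Or.inr hc2)
    · intro h hh
      obtain ⟨hy, hyinv, hx, hxinv⟩ := p.swap.closure (Or.inr hc3) h hh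
      exact ⟨hx, hxinv, hy, hyinv⟩
  -- a lever with strictly positive character value
  obtain ⟨u, hu, huinv, hucommX, hucommY⟩ :
      ∃ u : Heisenberg k m, 0 < c.χ u ∧ (∀ h ∈ c.C, u⁻¹ * h ∈ c.C) ∧
        (∀ j : Fin k, j ≠ i → Commute (hXg k m j) u) ∧
        (∀ j : Fin k, j ≠ i → Commute (hYg k m j) u) := by
    rcases hmin with hc1 | hc2 | hc3
    · exact ⟨hXg k m i, hc1.1, fun h hh => (quad h hh).2.1,
        fun j _ => heis_commute_XX j i,
        fun j hj => (heis_commute_XY (Ne.symm hj)).symm⟩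
    · refine ⟨(hXg k m i)⁻¹, by rw [c.chi_inv]; linarith [hc2.1], fun h hh => ?_,
        fun j _ => (heis_commute_XX j i).inv_right,
        fun j hj => ((heis_commute_XY (Ne.symm hj)).symm).inv_right⟩
      · have := (quad h hh).1
        rw [inv_inv]
        exact this
    · refine ⟨(hYg k m i)⁻¹, by rw [c.chi_inv]; linarith [hc3.1], fun h hh => ?_,
        fun j hj => (heis_commute_XY hj).inv_right,
        fun j _ => (heis_commute_YY j i).inv_right⟩
      · have := (quad h hh).2.2.1
        rw [inv_inv]
        exact this
  -- closure under left multiplication by all generators and inverses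
  have genX : ∀ j : Fin k, ∀ h ∈ c.C, hXg k m j * h ∈ c.C := by
    intro j h hh
    by_cases hj : j = i
    · subst hj; exact (quad h hh).1
    · exact c.lever hu huinv (hucommX j hj) hh
  have genXinv : ∀ j : Fin k, ∀ h ∈ c.C, (hXg k m j)⁻¹ * h ∈ c.C := by
    intro j h hh
    by_cases hj : j = i
    · subst hj; exact (quad h hh).2.1
    · exact c.lever hu huinv ((hucommX j hj).inv_left) hh
  have genY : ∀ j : Fin k, ∀ h ∈ c.C, hYg k m j * h ∈ c.C := by
    intro j h hh
    by_cases hj : j = i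
    · subst hj; exact (quad h hh).2.2.1
    · exact c.lever hu huinv (hucommY j hj) hh
  have genYinv : ∀ j : Fin k, ∀ h ∈ c.C, (hYg k m j)⁻¹ * h ∈ c.C := by
    intro j h hh
    by_cases hj : j = i
    · subst hj; exact (quad h hh).2.2.2
    · exact c.lever hu huinv ((hucommY j hj).inv_left) hh
  -- the word induction
  have main : ∀ w : FreeGroup ((Fin k ⊕ Fin k) ⊕ Unit), ∀ h' ∈ c.C,
      PresentedGroup.mk (heisenbergRels k m) w * h' ∈ c.C := by
    intro w
    refine FreeGroup.induction_on w ?_ ?_ ?_ ?_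
    · intro h' hh'
      rw [map_one, one_mul]
      exact hh'
    · rintro ((j | j) | ⟨⟩) h' hh'
      · exact genX j h' hh'
      · exact genY j h' hh'
      · exact c.zmul hh'
    · rintro ((j | j) | ⟨⟩) _ h' hh' <;> rw [map_inv]
      · exact genXinv j h' hh'
      · exact genYinv j h' hh'
      · exact c.zinv_mul hh'
    · intro v w hv hw h' hh'
      rw [map_mul, mul_assoc]
      exact hv _ (hw h' hh')
  intro h
  obtain ⟨w, rfl⟩ := PresentedGroup.mk_surjective (heisenbergRels k m) h
  have := main w 1 hone
  rwa [mul_one] at this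
end HeisAux

/-- Let `H` be the generalized Heisenberg group of rank `k ≥ 1` with nonzero parameters `m`
and let `A` be the right `ℤH`-module presented by generators `a₁, a₂` and relations
`a₁·z = a₁ + a₂`, `a₂·z = a₁ + 2a₂`, `aᵢ·yⱼ = aᵢ + aᵢ·xⱼ`.  If `χ : H → (ℝ,+)` is a
homomorphism such that for some index `i` the minimum of `0, χ(xᵢ), χ(yᵢ)` is attained
exactly once, then `A` is finitely generated as a module over the monoid ring `ℤ[H_χ]` of
the submonoid `H_χ = {h : χ h ≥ 0}`: there is a finite set `S ⊆ A` such that the only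
additive subgroup of `A` containing `S` and stable under the (right) action of all
`h ∈ H_χ` is `A` itself. -/
theorem heisMod_fg_over_monoid_ring_of_min_attained_once
    (k : ℕ) (hk : 1 ≤ k) (m : Fin k → ℤ) (hm : ∀ i, m i ≠ 0)
    (χ : Heisenberg k m → ℝ) (hχ : ∀ a b, χ (a * b) = χ a + χ b)
    (hmin : ∃ i : Fin k,
      (0 < χ (hXg k m i) ∧ 0 < χ (hYg k m i)) ∨
      (χ (hXg k m i) < 0 ∧ χ (hXg k m i) < χ (hYg k m i)) ∨
      (χ (hYg k m i) < 0 ∧ χ (hYg k m i) < χ (hXg k m i))) :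
    ∃ S : Finset (HeisMod k m), ∀ B : AddSubgroup (HeisMod k m),
      (∀ h : Heisenberg k m, 0 ≤ χ h → ∀ b ∈ B,
        MulOpposite.op (MonoidAlgebra.of ℤ (Heisenberg k m) h) • b ∈ B) →
      (↑S : Set (HeisMod k m)) ⊆ ↑B → B = ⊤ := by
  classical
  obtain ⟨i, hmin_i⟩ := hmin
  refine ⟨{e1 1, e2 1}, ?_⟩
  intro B hB hS
  let c : Ctx k m := ⟨χ, hχ, B, hB⟩
  have hone : (1 : Heisenberg k m) ∈ c.C := ⟨hS (by simp), hS (by simp)⟩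
  have hall : ∀ h : Heisenberg k m, h ∈ c.C := c.C_eq_univ hone i (hm i) hmin_i
  -- the two additive maps `u ↦ [(u,0)]` and `v ↦ [(0,v)]`
  let φ1 : HZR k m →+ HeisMod k m := AddMonoidHom.mk'
    (fun u => Submodule.Quotient.mk (u, (0 : HZR k m)))
    (fun u v => by
      rw [← Submodule.Quotient.mk_add, Prod.mk_add_mk, add_zero])
  let φ2 : HZR k m →+ HeisMod k m := AddMonoidHom.mk'
    (fun v => Submodule.Quotient.mk ((0 : HZR k m), v))
    (fun u v => by
      rw [← Submodule.Quotient.mk_add, Prod.mk_add_mk, add_zero])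
  have h1 : ∀ u : HZR k m, φ1 u ∈ B := by
    intro u
    refine MonoidAlgebra.induction_on (motive := fun w => φ1 w ∈ B) u
      (fun g => (hall g).1) (fun f g hf hg => ?_) (fun r f hf => ?_)
    · show φ1 (f + g) ∈ B
      rw [map_add]
      exact AddSubgroup.add_mem B hf hg
    · show φ1 (r • f) ∈ B
      have hmap := map_intCast_smul φ1 ℤ ℤ r f
      rw [Int.cast_id] at hmap
      rw [hmap]
      exact AddSubgroup.zsmul_mem B hf r
  have h2 : ∀ v : HZR k m, φ2 v ∈ B := by
    intro v
    refine MonoidAlgebra.induction_on (motive := fun w => φ2 w ∈ B) v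
      (fun g => (hall g).2) (fun f g hf hg => ?_) (fun r f hf => ?_)
    · show φ2 (f + g) ∈ B
      rw [map_add]
      exact AddSubgroup.add_mem B hf hg
    · show φ2 (r • f) ∈ B
      have hmap := map_intCast_smul φ2 ℤ ℤ r f
      rw [Int.cast_id] at hmap
      rw [hmap]
      exact AddSubgroup.zsmul_mem B hf r
  rw [eq_top_iff]
  rintro x -
  obtain ⟨⟨u, v⟩, rfl⟩ := Submodule.Quotient.mk_surjective (heisModSub k m) x
  have hsplit : (Submodule.Quotient.mk (u, v) : HeisMod k m) = φ1 u + φ2 v := by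
    show _ = Submodule.Quotient.mk _ + Submodule.Quotient.mk _
    rw [← Submodule.Quotient.mk_add, Prod.mk_add_mk, add_zero, zero_add]
  rw [hsplit]
  exact AddSubgroup.add_mem B (h1 u) (h2 v)
end

section
/- Let k ≥ 1 be an integer, let m_1, …, m_k be nonzero integers, let H be the generalized Heisenberg group of rank k with parameters m_1, …, m_k, and let A be the right ℤH-module presented by generators a_1, a_2 and relations a_1·z = a_1 + a_2, a_2·z = a_1 + 2a_2, and a_i·y_j = a_i + a_i·x_j for i ∈ {1,2} and 1 ≤ j ≤ k. Define homomorphisms χ_i, ψ_i, φ_i : H → (ℝ,+) by χ_i(x_j) = δ_{ij}, χ_i(y_j) = 0, ψ_i(x_j) = 0, ψ_i(y_j) = δ_{ij}, χ_i(z) = ψ_i(z) = 0, and φ_i = −χ_i − ψ_i. If χ : H → (ℝ,+) is a homomorphism such that A is NOT finitely generated as a module over the monoid ring ℤ[H_χ] (where H_χ = {h ∈ H : χ(h) ≥ 0}), then there exist, for each i ∈ {1,…,k}, an element λ_i ∈ {χ_i, ψ_i, φ_i} and a nonnegative real number c_i such that χ = c_1 λ_1 + ⋯ + c_k λ_k;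 in particular χ lies in one of the 3^k convex cones generated by sets of the form {λ_1, …, λ_k} with λ_i ∈ {χ_i, ψ_i, φ_i}. -/
set_option synthInstance.maxHeartbeats 1000000
set_option maxHeartbeats 1000000

open scoped commutatorElement

namespace HeisAux

variable {k : ℕ} {m : Fin k → ℤ}

lemma mk_rel {r : FreeGroup ((Fin k ⊕ Fin k) ⊕ Unit)} (hr : r ∈ heisenbergRels k m) :
    PresentedGroup.mk (heisenbergRels k m) r = 1 :=
  (QuotientGroup.eq_one_iff r).mpr (Subgroup.subset_normalClosure hr)

lemma mkX (i : Fin k) : PresentedGroup.mk (heisenbergRels k m) (heisX i) = hXg k m i := rfl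
lemma mkY (i : Fin k) : PresentedGroup.mk (heisenbergRels k m) (heisY i) = hYg k m i := rfl
lemma mkZ : PresentedGroup.mk (heisenbergRels k m) heisZ = hZg k m := rfl

lemma comm_xx (i j : Fin k) : hXg k m i * hXg k m j = hXg k m j * hXg k m i := by
  have h := mk_rel (m := m) (Or.inl ⟨i, j, rfl⟩)
  rw [map_commutatorElement, mkX, mkX] at h
  exact commutatorElement_eq_one_iff_mul_comm.mp h

lemma comm_yy (i j : Fin k) : hYg k m i * hYg k m j = hYg k m j * hYg k m i := by
  have h := mk_rel (m := m) (Or.inr (Or.inl ⟨i, j, rfl⟩))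
  rw [map_commutatorElement, mkY, mkY] at h
  exact commutatorElement_eq_one_iff_mul_comm.mp h

lemma comm_xz (i : Fin k) : hXg k m i * hZg k m = hZg k m * hXg k m i := by
  have h := mk_rel (m := m) (Or.inr (Or.inr (Or.inr (Or.inl ⟨i, rfl⟩))))
  rw [map_commutatorElement, mkX, mkZ] at h
  exact commutatorElement_eq_one_iff_mul_comm.mp h

lemma comm_yz (i : Fin k) : hYg k m i * hZg k m = hZg k m * hYg k m i := by
  have h := mk_rel (m := m) (Or.inr (Or.inr (Or.inr (Or.inr ⟨i, rfl⟩))))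
  rw [map_commutatorElement, mkY, mkZ] at h
  exact commutatorElement_eq_one_iff_mul_comm.mp h

lemma commutator_xy (i j : Fin k) :
    ⁅hXg k m i, hYg k m j⁆ = hZg k m ^ (if i = j then m i else 0) := by
  have h := mk_rel (m := m) (Or.inr (Or.inr (Or.inl ⟨i, j, rfl⟩)))
  rw [map_mul, map_inv, map_zpow, map_commutatorElement, mkX, mkY, mkZ] at h
  rw [mul_inv_eq_one] at h
  exact h

lemma comm_xy (i j : Fin k) :
    hXg k m i * hYg k m j =
      hZg k m ^ (if i = j then m i else 0) * (hYg k m j * hXg k m i) := by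
  have h := commutator_xy (m := m) i j
  rw [commutatorElement_def] at h
  calc hXg k m i * hYg k m j
      = (hXg k m i * hYg k m j * (hXg k m i)⁻¹ * (hYg k m j)⁻¹) * (hYg k m j * hXg k m i) := by
        group
    _ = hZg k m ^ (if i = j then m i else 0) * (hYg k m j * hXg k m i) := by rw [h]

/-- `z` is central. -/
lemma z_comm (g : Heisenberg k m) : hZg k m * g = g * hZg k m := by
  have hmem : g ∈ Subgroup.centralizer ({hZg k m} : Set (Heisenberg k m)) := by
    refine PresentedGroup.generated_by _ _ (fun j => ?_) g
    rcases j with (i | i) | u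
    · exact Subgroup.mem_centralizer_iff.mpr (by
        rintro h rfl; exact (comm_xz i).symm)
    · exact Subgroup.mem_centralizer_iff.mpr (by
        rintro h rfl; exact (comm_yz i).symm)
    · exact Subgroup.mem_centralizer_iff.mpr (by
        rintro h rfl; rfl)
  exact Subgroup.mem_centralizer_iff.mp hmem _ rfl

lemma zpow_comm (t : ℤ) (g : Heisenberg k m) : g * hZg k m ^ t = hZg k m ^ t * g :=
  (Commute.zpow_right (a := g) (z_comm g).symm t)

end HeisAux

namespace HeisAux

variable {k : ℕ} {m : Fin k → ℤ}

/-- Elements commuting with `u` modulo a power of `z` form a subgroup. -/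
lemma comm_mod_z_aux (u : Heisenberg k m)
    (hu : ∀ j : (Fin k ⊕ Fin k) ⊕ Unit, ∃ t : ℤ,
      u * PresentedGroup.of j = PresentedGroup.of j * u * hZg k m ^ t) :
    ∀ g : Heisenberg k m, ∃ t : ℤ, u * g = g * u * hZg k m ^ t := by
  intro g
  let S : Subgroup (Heisenberg k m) :=
    { carrier := {g | ∃ t : ℤ, u * g = g * u * hZg k m ^ t}
      one_mem' := ⟨0, by simp⟩
      mul_mem' := by
        rintro a b ⟨s, hs⟩ ⟨t, ht⟩
        refine ⟨t + s, ?_⟩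
        calc u * (a * b) = (u * a) * b := by rw [mul_assoc]
          _ = a * u * hZg k m ^ s * b := by rw [hs]
          _ = a * (u * (hZg k m ^ s * b)) := by simp [mul_assoc]
          _ = a * (u * (b * hZg k m ^ s)) := by rw [← zpow_comm]
          _ = a * ((u * b) * hZg k m ^ s) := by simp [mul_assoc]
          _ = a * ((b * u * hZg k m ^ t) * hZg k m ^ s) := by rw [ht]
          _ = a * b * u * (hZg k m ^ t * hZg k m ^ s) := by simp [mul_assoc]
          _ = a * b * u * hZg k m ^ (t + s) := by rw [← zpow_add]
      inv_mem' := by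
        rintro a ⟨s, hs⟩
        refine ⟨-s, ?_⟩
        have h1 : a⁻¹ * (u * a) * a⁻¹ = a⁻¹ * (a * u * hZg k m ^ s) * a⁻¹ := by rw [hs]
        have h2 : a⁻¹ * u = u * hZg k m ^ s * a⁻¹ := by
          calc a⁻¹ * u = a⁻¹ * (u * a) * a⁻¹ := by group
            _ = a⁻¹ * (a * u * hZg k m ^ s) * a⁻¹ := h1
            _ = u * hZg k m ^ s * a⁻¹ := by group
        have h3 : u * hZg k m ^ s * a⁻¹ * hZg k m ^ (-s) = u * a⁻¹ := by
          calc u * hZg k m ^ s * a⁻¹ * hZg k m ^ (-s)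
              = u * hZg k m ^ s * (a⁻¹ * hZg k m ^ (-s)) := by rw [mul_assoc]
            _ = u * hZg k m ^ s * (hZg k m ^ (-s) * a⁻¹) := by rw [zpow_comm (-s) a⁻¹]
            _ = u * (hZg k m ^ s * hZg k m ^ (-s)) * a⁻¹ := by simp [mul_assoc]
            _ = u * a⁻¹ := by rw [← zpow_add]; simp
        calc u * a⁻¹ = u * hZg k m ^ s * a⁻¹ * hZg k m ^ (-s) := h3.symm
          _ = (a⁻¹ * u) * hZg k m ^ (-s) := by rw [← h2]
          _ = a⁻¹ * u * hZg k m ^ (-s) := rfl }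
  exact PresentedGroup.generated_by _ S hu g

lemma comm_x_mod_z (i : Fin k) (g : Heisenberg k m) :
    ∃ t : ℤ, hXg k m i * g = g * hXg k m i * hZg k m ^ t := by
  refine comm_mod_z_aux _ (fun j => ?_) g
  rcases j with (l | l) | _
  · exact ⟨0, by rw [zpow_zero, mul_one]; exact comm_xx i l⟩
  · refine ⟨if i = l then m i else 0, ?_⟩
    show hXg k m i * hYg k m l = hYg k m l * hXg k m i * hZg k m ^ (if i = l then m i else 0)
    rw [comm_xy (m := m) i l, ← zpow_comm]
  · exact ⟨0, by rw [zpow_zero, mul_one]; exact comm_xz i⟩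

lemma comm_y_mod_z (i : Fin k) (g : Heisenberg k m) :
    ∃ t : ℤ, hYg k m i * g = g * hYg k m i * hZg k m ^ t := by
  refine comm_mod_z_aux _ (fun j => ?_) g
  rcases j with (l | l) | _
  · refine ⟨-(if l = i then m l else 0), ?_⟩
    have h := comm_xy (m := m) l i
    -- x_l * y_i = z^e * (y_i * x_l)  ⇒  y_i * x_l = z^(-e) * (x_l * y_i)
    have h2 : hYg k m i * hXg k m l =
        hZg k m ^ (-(if l = i then m l else 0)) * (hXg k m l * hYg k m i) := by
      rw [h]; group
    show hYg k m i * hXg k m l = hXg k m l * hYg k m i * hZg k m ^ (-(if l = i then m l else 0))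
    rw [h2, ← zpow_comm]
  · exact ⟨0, by rw [zpow_zero, mul_one]; exact comm_yy i l⟩
  · exact ⟨0, by rw [zpow_zero, mul_one]; exact comm_yz i⟩

end HeisAux

open MulOpposite

namespace HeisAux

variable {k : ℕ} {m : Fin k → ℤ}

/-- First basis vector of `A` translated by the group element `g`. -/
noncomputable def E1 (k : ℕ) (m : Fin k → ℤ) (g : Heisenberg k m) : HeisMod k m :=
  (heisModSub k m).mkQ (MonoidAlgebra.of ℤ (Heisenberg k m) g, 0)

/-- Second basis vector of `A` translated by the group element `g`. -/
noncomputable def E2 (k : ℕ) (m : Fin k → ℤ) (g : Heisenberg k m) : HeisMod k m :=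
  (heisModSub k m).mkQ (0, MonoidAlgebra.of ℤ (Heisenberg k m) g)

lemma mkQ_eq_zero_of_rel {r : HZR k m × HZR k m} (hr : r ∈ heisModRelators k m)
    (g : Heisenberg k m) :
    (heisModSub k m).mkQ
      (MulOpposite.op (MonoidAlgebra.of ℤ (Heisenberg k m) g) • r) = 0 := by
  rw [Submodule.mkQ_apply, Submodule.Quotient.mk_eq_zero]
  exact Submodule.smul_mem _ _ (Submodule.subset_span hr)

lemma of_mul (g h : Heisenberg k m) :
    MonoidAlgebra.of ℤ (Heisenberg k m) (g * h) =
      MonoidAlgebra.of ℤ (Heisenberg k m) g * MonoidAlgebra.of ℤ (Heisenberg k m) h :=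
  map_mul _ _ _

lemma E1_y (j : Fin k) (g : Heisenberg k m) :
    E1 k m (hYg k m j * g) = E1 k m g + E1 k m (hXg k m j * g) := by
  have h := mkQ_eq_zero_of_rel (m := m)
    (Or.inl (Or.inr ⟨j, rfl⟩)) g
  have e : (MulOpposite.op (MonoidAlgebra.of ℤ (Heisenberg k m) g) •
      ((MonoidAlgebra.of ℤ (Heisenberg k m) (hYg k m j) - 1 -
        MonoidAlgebra.of ℤ (Heisenberg k m) (hXg k m j), 0) : HZR k m × HZR k m)) =
      (MonoidAlgebra.of ℤ (Heisenberg k m) (hYg k m j * g), 0) -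
      (MonoidAlgebra.of ℤ (Heisenberg k m) g, 0) -
      (MonoidAlgebra.of ℤ (Heisenberg k m) (hXg k m j * g), 0) := by
    ext
    · simp [Prod.smul_def, op_smul_eq_mul, sub_mul, of_mul]
    · simp [Prod.smul_def, op_smul_eq_mul]
  rw [e, map_sub, map_sub] at h
  have : E1 k m (hYg k m j * g) - E1 k m g - E1 k m (hXg k m j * g) = 0 := h
  linear_combination (norm := abel) this

lemma E2_y (j : Fin k) (g : Heisenberg k m) :
    E2 k m (hYg k m j * g) = E2 k m g + E2 k m (hXg k m j * g) := by
  have h := mkQ_eq_zero_of_rel (m := m)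
    (Or.inr ⟨j, rfl⟩) g
  have e : (MulOpposite.op (MonoidAlgebra.of ℤ (Heisenberg k m) g) •
      ((0, MonoidAlgebra.of ℤ (Heisenberg k m) (hYg k m j) - 1 -
        MonoidAlgebra.of ℤ (Heisenberg k m) (hXg k m j)) : HZR k m × HZR k m)) =
      (0, MonoidAlgebra.of ℤ (Heisenberg k m) (hYg k m j * g)) -
      (0, MonoidAlgebra.of ℤ (Heisenberg k m) g) -
      (0, MonoidAlgebra.of ℤ (Heisenberg k m) (hXg k m j * g)) := by
    ext
    · simp [Prod.smul_def, op_smul_eq_mul]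
    · simp [Prod.smul_def, op_smul_eq_mul, sub_mul, of_mul]
  rw [e, map_sub, map_sub] at h
  have : E2 k m (hYg k m j * g) - E2 k m g - E2 k m (hXg k m j * g) = 0 := h
  linear_combination (norm := abel) this

lemma E1_z (g : Heisenberg k m) :
    E1 k m (hZg k m * g) = E1 k m g + E2 k m g := by
  have h := mkQ_eq_zero_of_rel (m := m)
    (Or.inl (Or.inl (Or.inl rfl))) g
  have e : (MulOpposite.op (MonoidAlgebra.of ℤ (Heisenberg k m) g) •
      ((MonoidAlgebra.of ℤ (Heisenberg k m) (hZg k m) - 1, -1) : HZR k m × HZR k m)) =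
      (MonoidAlgebra.of ℤ (Heisenberg k m) (hZg k m * g), 0) -
      (MonoidAlgebra.of ℤ (Heisenberg k m) g, 0) -
      (0, MonoidAlgebra.of ℤ (Heisenberg k m) g) := by
    ext
    · simp [Prod.smul_def, op_smul_eq_mul, sub_mul, of_mul]
    · simp [Prod.smul_def, op_smul_eq_mul]
  rw [e, map_sub, map_sub] at h
  have : E1 k m (hZg k m * g) - E1 k m g - E2 k m g = 0 := h
  linear_combination (norm := abel) this

lemma E2_z (g : Heisenberg k m) :
    E2 k m (hZg k m * g) = E1 k m g + E2 k m g + E2 k m g := by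
  have h := mkQ_eq_zero_of_rel (m := m)
    (Or.inl (Or.inl (Or.inr rfl))) g
  have e : (MulOpposite.op (MonoidAlgebra.of ℤ (Heisenberg k m) g) •
      ((-1, MonoidAlgebra.of ℤ (Heisenberg k m) (hZg k m) - 2) : HZR k m × HZR k m)) =
      (0, MonoidAlgebra.of ℤ (Heisenberg k m) (hZg k m * g)) -
      (MonoidAlgebra.of ℤ (Heisenberg k m) g, 0) -
      (0, MonoidAlgebra.of ℤ (Heisenberg k m) g) -
      (0, MonoidAlgebra.of ℤ (Heisenberg k m) g) := by
    ext
    · simp [Prod.smul_def, op_smul_eq_mul]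
    · simp [Prod.smul_def, op_smul_eq_mul, sub_mul, of_mul, two_mul, sub_sub]
  rw [e, map_sub, map_sub, map_sub] at h
  have : E2 k m (hZg k m * g) - E1 k m g - E2 k m g - E2 k m g = 0 := h
  linear_combination (norm := abel) this

lemma E1_smul (g h : Heisenberg k m) :
    MulOpposite.op (MonoidAlgebra.of ℤ (Heisenberg k m) h) • E1 k m g = E1 k m (g * h) := by
  rw [E1, ← map_smul, E1]
  congr 1
  ext
  · simp [Prod.smul_def, op_smul_eq_mul, of_mul]
  · simp [Prod.smul_def, op_smul_eq_mul]

lemma E2_smul (g h : Heisenberg k m) :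
    MulOpposite.op (MonoidAlgebra.of ℤ (Heisenberg k m) h) • E2 k m g = E2 k m (g * h) := by
  rw [E2, ← map_smul, E2]
  congr 1
  ext
  · simp [Prod.smul_def, op_smul_eq_mul]
  · simp [Prod.smul_def, op_smul_eq_mul, of_mul]

end HeisAux

namespace HeisAux

variable {k : ℕ} {m : Fin k → ℤ}

/-- Both translated basis vectors lie in `B`. -/
def Pm (B : AddSubgroup (HeisMod k m)) (g : Heisenberg k m) : Prop :=
  E1 k m g ∈ B ∧ E2 k m g ∈ B

variable {B : AddSubgroup (HeisMod k m)}

lemma Pm_z {g : Heisenberg k m} (h : Pm B g) : Pm B (hZg k m * g) := by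
  refine ⟨?_, ?_⟩
  · rw [E1_z]; exact B.add_mem h.1 h.2
  · rw [E2_z]; exact B.add_mem (B.add_mem h.1 h.2) h.2

lemma Pm_zinv {g : Heisenberg k m} (h : Pm B g) : Pm B ((hZg k m)⁻¹ * g) := by
  have hg : hZg k m * ((hZg k m)⁻¹ * g) = g := by group
  have h1 : E1 k m g = E1 k m ((hZg k m)⁻¹ * g) + E2 k m ((hZg k m)⁻¹ * g) := by
    conv_lhs => rw [← hg]
    exact E1_z _
  have h2 : E2 k m g = E1 k m ((hZg k m)⁻¹ * g) + E2 k m ((hZg k m)⁻¹ * g)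
      + E2 k m ((hZg k m)⁻¹ * g) := by
    conv_lhs => rw [← hg]
    exact E2_z _
  have hE2 : E2 k m ((hZg k m)⁻¹ * g) = E2 k m g - E1 k m g := by
    rw [h1, h2]; abel
  have hE1 : E1 k m ((hZg k m)⁻¹ * g) = E1 k m g - (E2 k m g - E1 k m g) := by
    rw [← hE2, h1]; abel
  exact ⟨hE1 ▸ B.sub_mem h.1 (B.sub_mem h.2 h.1), hE2 ▸ B.sub_mem h.2 h.1⟩

lemma Pm_zpow (t : ℤ) {g : Heisenberg k m} (h : Pm B g) : Pm B (hZg k m ^ t * g) := by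
  induction t using Int.induction_on with
  | zero => simpa using h
  | succ n ih =>
      have : hZg k m ^ ((n : ℤ) + 1) * g = hZg k m * (hZg k m ^ (n : ℤ) * g) := by
        rw [zpow_add_one]; group
      rw [this]; exact Pm_z ih
  | pred n ih =>
      have : hZg k m ^ (-(n : ℤ) - 1) * g = (hZg k m)⁻¹ * (hZg k m ^ (-(n : ℤ)) * g) := by
        rw [zpow_sub_one]; group
      rw [this]; exact Pm_zinv ih

variable {χ : Heisenberg k m → ℝ}

lemma Pm_mul
    (hB : ∀ h : Heisenberg k m, 0 ≤ χ h → ∀ b ∈ B,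
      MulOpposite.op (MonoidAlgebra.of ℤ (Heisenberg k m) h) • b ∈ B)
    {g : Heisenberg k m} (h : Heisenberg k m) (hh : 0 ≤ χ h) (hP : Pm B g) :
    Pm B (g * h) :=
  ⟨E1_smul g h ▸ hB h hh _ hP.1, E2_smul g h ▸ hB h hh _ hP.2⟩

lemma Pm_comm_x (i : Fin k) (g : Heisenberg k m) : Pm B (hXg k m i * g) ↔ Pm B (g * hXg k m i) := by
  obtain ⟨t, ht⟩ := comm_x_mod_z (m := m) i g
  have ht' : hXg k m i * g = hZg k m ^ t * (g * hXg k m i) := by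
    rw [ht, ← zpow_comm]
  constructor
  · intro h
    have := Pm_zpow (-t) h
    rw [ht'] at this
    have e : hZg k m ^ (-t) * (hZg k m ^ t * (g * hXg k m i)) = g * hXg k m i := by group
    rwa [e] at this
  · intro h
    rw [ht']
    exact Pm_zpow t h

lemma Pm_comm_y (i : Fin k) (g : Heisenberg k m) : Pm B (hYg k m i * g) ↔ Pm B (g * hYg k m i) := by
  obtain ⟨t, ht⟩ := comm_y_mod_z (m := m) i g
  have ht' : hYg k m i * g = hZg k m ^ t * (g * hYg k m i) := by
    rw [ht, ← zpow_comm]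
  constructor
  · intro h
    have := Pm_zpow (-t) h
    rw [ht'] at this
    have e : hZg k m ^ (-t) * (hZg k m ^ t * (g * hYg k m i)) = g * hYg k m i := by group
    rwa [e] at this
  · intro h
    rw [ht']
    exact Pm_zpow t h

/-- ternary rule: from `g` and `g·x` deduce `g·y`. -/
lemma Pm_t1 (j : Fin k) {g : Heisenberg k m} (h0 : Pm B g) (hx : Pm B (g * hXg k m j)) :
    Pm B (g * hYg k m j) := by
  rw [← Pm_comm_y]
  rw [← Pm_comm_x] at hx
  exact ⟨(E1_y j g) ▸ B.add_mem h0.1 hx.1, (E2_y j g) ▸ B.add_mem h0.2 hx.2⟩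

/-- ternary rule: from `g` and `g·y` deduce `g·x`. -/
lemma Pm_t2 (j : Fin k) {g : Heisenberg k m} (h0 : Pm B g) (hy : Pm B (g * hYg k m j)) :
    Pm B (g * hXg k m j) := by
  rw [← Pm_comm_x]
  rw [← Pm_comm_y] at hy
  constructor
  · have : E1 k m (hXg k m j * g) = E1 k m (hYg k m j * g) - E1 k m g := by
      rw [E1_y]; abel
    rw [this]; exact B.sub_mem hy.1 h0.1
  · have : E2 k m (hXg k m j * g) = E2 k m (hYg k m j * g) - E2 k m g := by
      rw [E2_y]; abel
    rw [this]; exact B.sub_mem hy.2 h0.2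

/-- ternary rule: from `g·x` and `g·y` deduce `g`. -/
lemma Pm_t3 (j : Fin k) {g : Heisenberg k m} (hx : Pm B (g * hXg k m j))
    (hy : Pm B (g * hYg k m j)) : Pm B g := by
  rw [← Pm_comm_x] at hx
  rw [← Pm_comm_y] at hy
  constructor
  · have : E1 k m g = E1 k m (hYg k m j * g) - E1 k m (hXg k m j * g) := by
      rw [E1_y]; abel
    rw [this]; exact B.sub_mem hy.1 hx.1
  · have : E2 k m g = E2 k m (hYg k m j * g) - E2 k m (hXg k m j * g) := by
      rw [E2_y]; abel
    rw [this]; exact B.sub_mem hy.2 hx.2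

end HeisAux

open MulOpposite

namespace HeisAux

lemma cases_offray (a b : ℝ)
    (h : ¬ ((0 ≤ a ∧ b = 0) ∨ (a = 0 ∧ 0 ≤ b) ∨ (a = b ∧ a ≤ 0))) :
    (0 < b ∧ b ≤ a) ∨ (0 < a ∧ a ≤ b) ∨ (b < 0 ∧ 0 ≤ a) ∨ (a < 0 ∧ 0 ≤ b) ∨
      (a < b ∧ b ≤ 0) ∨ (b < a ∧ a ≤ 0) := by
  by_contra hc
  push_neg at hc
  obtain ⟨h1, h2, h3, h4, h5, h6⟩ := hc
  apply h
  rcases lt_trichotomy a 0 with ha | ha | ha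
  · rcases lt_trichotomy b 0 with hb | hb | hb
    · refine Or.inr (Or.inr ⟨?_, le_of_lt ha⟩)
      have := h5; have := h6
      by_contra hab
      rcases lt_or_gt_of_ne hab with hlt | hgt
      · linarith [h5 hlt]
      · linarith [h6 hgt]
    · linarith [h4 ha]
    · linarith [h4 ha]
  · refine Or.inr (Or.inl ⟨ha, ?_⟩)
    by_contra hb
    push_neg at hb
    linarith [h3 hb]
  · rcases lt_trichotomy b 0 with hb | hb | hb
    · linarith [h3 hb]
    · exact Or.inl ⟨le_of_lt ha, hb⟩
    · linarith [h1 hb, h2 ha]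

variable {k : ℕ} {m : Fin k → ℤ}

section Chi

variable {χ : Heisenberg k m → ℝ} (hχ : ∀ a b : Heisenberg k m, χ (a * b) = χ a + χ b)

include hχ

lemma chi_one : χ 1 = 0 := by have := hχ 1 1; simpa using this.symm

lemma chi_inv (g : Heisenberg k m) : χ g⁻¹ = -χ g := by
  have := hχ g g⁻¹
  rw [mul_inv_cancel] at this
  have h1 := chi_one hχ
  linarith

lemma chi_pow (u : Heisenberg k m) (n : ℕ) : χ (u ^ n) = n * χ u := by
  induction n with
  | zero => simpa using chi_one hχ
  | succ n ih => rw [pow_succ, hχ, ih]; push_cast; ring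

end Chi

/-- The key finite-generation statement: if for some coordinate `i0` the pair
`(χ(x_{i0}), χ(y_{i0}))` is off the three rays, then any `H_χ`-closed subgroup containing
the two basis vectors is everything. -/
theorem fg_of_offray (i0 : Fin k)
    (χ : Heisenberg k m → ℝ) (hχ : ∀ a b : Heisenberg k m, χ (a * b) = χ a + χ b)
    (hoff : ¬ ((0 ≤ χ (hXg k m i0) ∧ χ (hYg k m i0) = 0) ∨
        (χ (hXg k m i0) = 0 ∧ 0 ≤ χ (hYg k m i0)) ∨
        (χ (hXg k m i0) = χ (hYg k m i0) ∧ χ (hXg k m i0) ≤ 0)))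
    (B : AddSubgroup (HeisMod k m))
    (hB : ∀ h : Heisenberg k m, 0 ≤ χ h → ∀ b ∈ B,
      MulOpposite.op (MonoidAlgebra.of ℤ (Heisenberg k m) h) • b ∈ B)
    (h1B : E1 k m 1 ∈ B) (h2B : E2 k m 1 ∈ B) :
    B = ⊤ := by
  set x := hXg k m i0 with hx
  set y := hYg k m i0 with hy
  set a := χ x with hadef
  set b := χ y with hbdef
  -- step 1: a single-source move with negative χ-value
  have hstep : ∃ u : Heisenberg k m, χ u < 0 ∧ ∀ g : Heisenberg k m, Pm B g → Pm B (g * u) := by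
    rcases cases_offray a b hoff with ⟨hb0, hba⟩ | ⟨ha0, hab⟩ | ⟨hb0, ha0⟩ | ⟨ha0, hb0⟩ |
      ⟨hab, hb0⟩ | ⟨hba, ha0⟩
    · -- 0 < b, b ≤ a : u = y⁻¹
      refine ⟨y⁻¹, by rw [chi_inv hχ]; linarith, fun g hP => ?_⟩
      have hval : 0 ≤ χ (y⁻¹ * x) := by rw [hχ, chi_inv hχ]; linarith
      have hPx : Pm B ((g * y⁻¹) * x) := by
        rw [mul_assoc]; exact Pm_mul hB _ hval hP
      have hPy : Pm B ((g * y⁻¹) * y) := by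
        have e : (g * y⁻¹) * y = g := by group
        rw [e]; exact hP
      exact Pm_t3 i0 hPx hPy
    · -- 0 < a, a ≤ b : u = x⁻¹
      refine ⟨x⁻¹, by rw [chi_inv hχ]; linarith, fun g hP => ?_⟩
      have hval : 0 ≤ χ (x⁻¹ * y) := by rw [hχ, chi_inv hχ]; linarith
      have hPy : Pm B ((g * x⁻¹) * y) := by
        rw [mul_assoc]; exact Pm_mul hB _ hval hP
      have hPx : Pm B ((g * x⁻¹) * x) := by
        have e : (g * x⁻¹) * x = g := by group
        rw [e]; exact hP
      exact Pm_t3 i0 hPx hPy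
    · -- b < 0, 0 ≤ a : u = y
      refine ⟨y, by linarith, fun g hP => ?_⟩
      exact Pm_t1 i0 hP (Pm_mul hB _ ha0 hP)
    · -- a < 0, 0 ≤ b : u = x
      refine ⟨x, by linarith, fun g hP => ?_⟩
      exact Pm_t2 i0 hP (Pm_mul hB _ hb0 hP)
    · -- a < b, b ≤ 0 : u = y⁻¹ * x
      refine ⟨y⁻¹ * x, by rw [hχ, chi_inv hχ]; linarith, fun g hP => ?_⟩
      have hPh : Pm B (g * y⁻¹) := Pm_mul hB _ (by rw [chi_inv hχ]; linarith) hP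
      have hPy : Pm B ((g * y⁻¹) * y) := by
        have e : (g * y⁻¹) * y = g := by group
        rw [e]; exact hP
      have := Pm_t2 i0 hPh hPy
      rwa [mul_assoc] at this
    · -- b < a, a ≤ 0 : u = x⁻¹ * y
      refine ⟨x⁻¹ * y, by rw [hχ, chi_inv hχ]; linarith, fun g hP => ?_⟩
      have hPh : Pm B (g * x⁻¹) := Pm_mul hB _ (by rw [chi_inv hχ]; linarith) hP
      have hPx : Pm B ((g * x⁻¹) * x) := by
        have e : (g * x⁻¹) * x = g := by group
        rw [e]; exact hP
      have := Pm_t1 i0 hPh hPx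
      rwa [mul_assoc] at this
  obtain ⟨u, hu, hstep⟩ := hstep
  -- step 2: from any `g` with `Pm B g`, reach `Pm B (g * h)` for every `h`
  have hall : ∀ g h : Heisenberg k m, Pm B g → Pm B (g * h) := by
    intro g h hP
    obtain ⟨n, hn⟩ := exists_nat_ge (χ h / χ u)
    have hnu : (n : ℝ) * χ u ≤ χ h := by
      have := (div_le_iff_of_neg hu).mp hn
      linarith
    have hval : 0 ≤ χ (h * (u⁻¹) ^ n) := by
      rw [hχ, chi_pow hχ, chi_inv hχ]
      have : (n : ℝ) * (-χ u) = -((n : ℝ) * χ u) := by ring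
      rw [this]
      linarith
    have key : ∀ j : ℕ, Pm B (g * (h * (u⁻¹) ^ n) * u ^ j) := by
      intro j
      induction j with
      | zero => simpa using Pm_mul hB _ hval hP
      | succ j ih =>
          have e : g * (h * (u⁻¹) ^ n) * u ^ (j + 1) = (g * (h * (u⁻¹) ^ n) * u ^ j) * u := by
            rw [pow_succ]; group
          rw [e]; exact hstep _ ih
    have := key n
    have e : g * (h * (u⁻¹) ^ n) * u ^ n = g * h := by
      rw [inv_pow]; group
    rwa [e] at this
  have hallg : ∀ g : Heisenberg k m, Pm B g := by
    intro g
    have := hall 1 g ⟨h1B, h2B⟩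
    rwa [one_mul] at this
  -- step 3: conclude B = ⊤
  rw [AddSubgroup.eq_top_iff']
  intro w
  obtain ⟨p, rfl⟩ := Submodule.Quotient.mk_surjective (heisModSub k m) w
  obtain ⟨u1, u2⟩ := p
  have hsplit : (Submodule.Quotient.mk (u1, u2) : HeisMod k m) =
      (heisModSub k m).mkQ (u1, 0) + (heisModSub k m).mkQ (0, u2) := by
    rw [← map_add]
    congr 1
    simp
  rw [hsplit]
  have key1 : ∀ u : HZR k m, (heisModSub k m).mkQ (u, 0) ∈ B := by
    intro u
    induction u using MonoidAlgebra.induction_linear with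
    | zero => rw [Prod.mk_zero_zero, map_zero]; exact B.zero_mem
    | add f g hf hg =>
        have : ((f + g : HZR k m), (0 : HZR k m)) = (f, 0) + (g, 0) := by simp
        rw [this, map_add]; exact B.add_mem hf hg
    | single g c =>
        have e : ((MonoidAlgebra.single g c : HZR k m), (0 : HZR k m)) =
            c • ((MonoidAlgebra.of ℤ (Heisenberg k m) g : HZR k m), (0 : HZR k m)) := by
          simp [MonoidAlgebra.of_apply, Prod.smul_def, MonoidAlgebra.smul_single']
        rw [e, map_zsmul]
        exact B.zsmul_mem (hallg g).1 c
  have key2 : ∀ u : HZR k m, (heisModSub k m).mkQ (0, u) ∈ B := by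
    intro u
    induction u using MonoidAlgebra.induction_linear with
    | zero => rw [Prod.mk_zero_zero, map_zero]; exact B.zero_mem
    | add f g hf hg =>
        have : ((0 : HZR k m), (f + g : HZR k m)) = (0, f) + (0, g) := by simp
        rw [this, map_add]; exact B.add_mem hf hg
    | single g c =>
        have e : ((0 : HZR k m), (MonoidAlgebra.single g c : HZR k m)) =
            c • ((0 : HZR k m), (MonoidAlgebra.of ℤ (Heisenberg k m) g : HZR k m)) := by
          simp [MonoidAlgebra.of_apply, Prod.smul_def, MonoidAlgebra.smul_single']
        rw [e, map_zsmul]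
        exact B.zsmul_mem (hallg g).2 c
  exact B.add_mem (key1 u1) (key2 u2)

end HeisAux

namespace HeisAux

variable {k : ℕ} {m : Fin k → ℤ}

section Chi2

variable {χ : Heisenberg k m → ℝ} (hχ : ∀ a b : Heisenberg k m, χ (a * b) = χ a + χ b)

include hχ

lemma chi_zpow (u : Heisenberg k m) (t : ℤ) : χ (u ^ t) = t * χ u := by
  cases t with
  | ofNat n => rw [Int.ofNat_eq_coe, zpow_natCast, chi_pow hχ]; push_cast; ring
  | negSucc n =>
      rw [zpow_negSucc, chi_inv hχ, chi_pow hχ]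
      push_cast; ring

lemma chi_z_zero (hk : 1 ≤ k) (hm : ∀ i, m i ≠ 0) : χ (hZg k m) = 0 := by
  have i : Fin k := ⟨0, hk⟩
  have hc := commutator_xy (m := m) i i
  rw [if_pos rfl] at hc
  have h1 : χ ⁅hXg k m i, hYg k m i⁆ = 0 := by
    rw [commutatorElement_def, hχ, hχ, hχ, chi_inv hχ, chi_inv hχ]
    ring
  rw [hc, chi_zpow hχ] at h1
  have hmi : ((m i : ℝ)) ≠ 0 := Int.cast_ne_zero.mpr (hm i)
  exact (mul_eq_zero.mp h1).resolve_left hmi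

lemma chi_ext {χ' : Heisenberg k m → ℝ}
    (hχ' : ∀ a b : Heisenberg k m, χ' (a * b) = χ' a + χ' b)
    (hgen : ∀ j : (Fin k ⊕ Fin k) ⊕ Unit,
      χ (PresentedGroup.of j) = χ' (PresentedGroup.of j)) :
    χ = χ' := by
  funext g
  let S : Subgroup (Heisenberg k m) :=
    { carrier := {g | χ g = χ' g}
      one_mem' := by
        show χ 1 = χ' 1
        rw [chi_one hχ, chi_one hχ']
      mul_mem' := by
        rintro p q hp hq
        show χ (p * q) = χ' (p * q)
        rw [hχ, hχ', hp, hq]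
      inv_mem' := by
        rintro p hp
        show χ p⁻¹ = χ' p⁻¹
        rw [chi_inv hχ, chi_inv hχ', hp] }
  exact PresentedGroup.generated_by _ S hgen g

end Chi2

end HeisAux

open HeisAux in
/-- Let `H` be the generalized Heisenberg group of rank `k ≥ 1` with nonzero parameters `m`
and let `A` be the right `ℤH`-module presented by generators `a₁, a₂` and relations
`a₁·z = a₁ + a₂`, `a₂·z = a₁ + 2a₂`, `aᵢ·yⱼ = aᵢ + aᵢ·xⱼ`.  Let `χᵢ, ψᵢ : H → (ℝ,+)` be
the characters with `χᵢ(xⱼ) = δᵢⱼ`, `χᵢ(yⱼ) = 0`, `ψᵢ(xⱼ) = 0`, `ψᵢ(yⱼ) = δᵢⱼ` and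
`χᵢ(z) = ψᵢ(z) = 0`, and set `φᵢ = -χᵢ - ψᵢ`.  If `χ : H → (ℝ,+)` is a homomorphism such
that `A` is NOT finitely generated over the monoid ring `ℤ[H_χ]` of
`H_χ = {h : χ h ≥ 0}`, then `χ = c₁λ₁ + ⋯ + c_kλ_k` for some nonnegative reals `cᵢ` and
some `λᵢ ∈ {χᵢ, ψᵢ, φᵢ}`; in particular `χ` lies in one of the `3^k` convex cones
generated by the sets `{λ₁, …, λ_k}`. -/
theorem char_in_cone_of_heisMod_not_fg
    (k : ℕ) (hk : 1 ≤ k) (m : Fin k → ℤ) (hm : ∀ i, m i ≠ 0)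
    (χvec ψvec : Fin k → Heisenberg k m → ℝ)
    (hχhom : ∀ i, ∀ a b, χvec i (a * b) = χvec i a + χvec i b)
    (hψhom : ∀ i, ∀ a b, ψvec i (a * b) = ψvec i a + ψvec i b)
    (hχx : ∀ i j, χvec i (hXg k m j) = if i = j then 1 else 0)
    (hχy : ∀ i j, χvec i (hYg k m j) = 0)
    (hχz : ∀ i, χvec i (hZg k m) = 0)
    (hψx : ∀ i j, ψvec i (hXg k m j) = 0)
    (hψy : ∀ i j, ψvec i (hYg k m j) = if i = j then 1 else 0)
    (hψz : ∀ i, ψvec i (hZg k m) = 0)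
    (χ : Heisenberg k m → ℝ) (hχ : ∀ a b, χ (a * b) = χ a + χ b)
    (hnfg : ¬ ∃ S : Finset (HeisMod k m), ∀ B : AddSubgroup (HeisMod k m),
      (∀ h : Heisenberg k m, 0 ≤ χ h → ∀ b ∈ B,
        MulOpposite.op (MonoidAlgebra.of ℤ (Heisenberg k m) h) • b ∈ B) →
      (↑S : Set (HeisMod k m)) ⊆ ↑B → B = ⊤) :
    ∃ (c : Fin k → ℝ) (lam : Fin k → Heisenberg k m → ℝ),
      (∀ i, 0 ≤ c i) ∧
      (∀ i, lam i = χvec i ∨ lam i = ψvec i ∨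
        lam i = fun h => -(χvec i h) - ψvec i h) ∧
      χ = fun h => ∑ i, c i * lam i h := by
  classical
  by_cases hray : ∀ i : Fin k, (0 ≤ χ (hXg k m i) ∧ χ (hYg k m i) = 0) ∨
      (χ (hXg k m i) = 0 ∧ 0 ≤ χ (hYg k m i)) ∨
      (χ (hXg k m i) = χ (hYg k m i) ∧ χ (hXg k m i) ≤ 0)
  · -- the conclusion holds
    have hex : ∀ i : Fin k, ∃ (ci : ℝ) (li : Heisenberg k m → ℝ), 0 ≤ ci ∧
        (li = χvec i ∨ li = ψvec i ∨ li = fun h => -(χvec i h) - ψvec i h) ∧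
        ci * li (hXg k m i) = χ (hXg k m i) ∧ ci * li (hYg k m i) = χ (hYg k m i) := by
      intro i
      rcases hray i with ⟨ha, hb⟩ | ⟨ha, hb⟩ | ⟨hab, ha⟩
      · exact ⟨χ (hXg k m i), χvec i, ha, Or.inl rfl,
          by rw [hχx, if_pos rfl]; ring, by rw [hχy, hb]; ring⟩
      · exact ⟨χ (hYg k m i), ψvec i, hb, Or.inr (Or.inl rfl),
          by rw [hψx, ha]; ring, by rw [hψy, if_pos rfl]; ring⟩
      · refine ⟨-χ (hXg k m i), fun h => -(χvec i h) - ψvec i h, by linarith,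
          Or.inr (Or.inr rfl), ?_, ?_⟩
        · simp only []
          rw [hχx, hψx, if_pos rfl]; ring
        · simp only []
          rw [hχy, hψy, if_pos rfl, ← hab]; ring
    choose c lam hc hmem hvx hvy using hex
    have hlamhom : ∀ i, ∀ a b, lam i (a * b) = lam i a + lam i b := by
      intro i
      rcases hmem i with h | h | h <;> rw [h]
      · exact hχhom i
      · exact hψhom i
      · intro a b
        simp only [hχhom i, hψhom i]; ring
    have hlamx0 : ∀ i j, i ≠ j → lam i (hXg k m j) = 0 := by
      intro i j hij
      rcases hmem i with h | h | h <;> rw [h]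
      · rw [hχx, if_neg hij]
      · exact hψx i j
      · simp only [hχx, hψx, if_neg hij]; ring
    have hlamy0 : ∀ i j, i ≠ j → lam i (hYg k m j) = 0 := by
      intro i j hij
      rcases hmem i with h | h | h <;> rw [h]
      · exact hχy i j
      · rw [hψy, if_neg hij]
      · simp only [hχy, hψy, if_neg hij]; ring
    have hlamz : ∀ i, lam i (hZg k m) = 0 := by
      intro i
      rcases hmem i with h | h | h <;> rw [h]
      · exact hχz i
      · exact hψz i
      · simp only [hχz, hψz]; ring
    refine ⟨c, lam, hc, hmem, ?_⟩
    have hfhom : ∀ a b : Heisenberg k m,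
        (fun h => ∑ i, c i * lam i h) (a * b) =
          (fun h => ∑ i, c i * lam i h) a + (fun h => ∑ i, c i * lam i h) b := by
      intro a b
      simp only [hlamhom _ a b, mul_add]
      rw [Finset.sum_add_distrib]
    refine chi_ext hχ hfhom ?_
    rintro ((l | l) | u)
    · show χ (hXg k m l) = ∑ i, c i * lam i (hXg k m l)
      rw [Finset.sum_eq_single l]
      · exact (hvx l).symm
      · intro i _ hil
        rw [hlamx0 i l hil, mul_zero]
      · intro h; exact absurd (Finset.mem_univ l) h
    · show χ (hYg k m l) = ∑ i, c i * lam i (hYg k m l)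
      rw [Finset.sum_eq_single l]
      · exact (hvy l).symm
      · intro i _ hil
        rw [hlamy0 i l hil, mul_zero]
      · intro h; exact absurd (Finset.mem_univ l) h
    · show χ (hZg k m) = ∑ i, c i * lam i (hZg k m)
      rw [chi_z_zero hχ hk hm]
      simp [hlamz]
  · -- contradiction with hnfg
    exfalso
    rw [not_forall] at hray
    obtain ⟨i0, hoff⟩ := hray
    apply hnfg
    refine ⟨{E1 k m 1, E2 k m 1}, ?_⟩
    intro B hB hSB
    refine fg_of_offray i0 χ hχ hoff B hB ?_ ?_
    · exact hSB (by simp)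
    · exact hSB (by simp)
end
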